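/- arXiv:2411.14889 — 8 statements merged into one kernel-verified Lean document; each statement's English description precedes it below -/
import Mathlib

section
/- Let r ≥ 2 and let G be an r-regular graph. A set S ⊆ V(G) is an r-percolating set of G if and only if S is a vertex cover of G. Consequently, m(G,r) = β(G) = n(G) − α(G). -/
open SimpleGraph Set

variable {V : Type*}

/-- One step of the (p,q)-spreading color change rule: a white vertex `w` with at least `p`
blue neighbors, at least one of which has at most `q` white neighbors, becomes blue. -/
def spreadStep (G : SimpleGraph V) (p : ℕ) (q : ℕ∞) (B : Set V) : Set V :=
  B ∪ {w | p ≤ (G.neighborSet w ∩ B).ncard ∧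
      ∃ u ∈ G.neighborSet w ∩ B, ((G.neighborSet u \ B).ncard : ℕ∞) ≤ q}

/-- `S` is a (p,q)-spreading set if iterating the rule eventually colors all vertices blue. -/
def IsSpreadingSet (G : SimpleGraph V) (p : ℕ) (q : ℕ∞) (S : Set V) : Prop :=
  ∃ n : ℕ, (spreadStep G p q)^[n] S = Set.univ

/-- The (p,q)-spreading number σ_{(p,q)}(G). -/
noncomputable def spreadNumber (G : SimpleGraph V) (p : ℕ) (q : ℕ∞) : ℕ :=
  sInf {k | ∃ S : Set V, S.ncard = k ∧ IsSpreadingSet G p q S}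

/-- One step of r-neighbor bootstrap percolation. -/
def percStep (G : SimpleGraph V) (r : ℕ) (B : Set V) : Set V :=
  B ∪ {w | r ≤ (G.neighborSet w ∩ B).ncard}

/-- `S` is an r-percolating set of `G`. -/
def IsPercolating (G : SimpleGraph V) (r : ℕ) (S : Set V) : Prop :=
  ∃ n : ℕ, (percStep G r)^[n] S = Set.univ

/-- The r-percolation number m(G,r). -/
noncomputable def percNumber (G : SimpleGraph V) (r : ℕ) : ℕ :=
  sInf {k | ∃ S : Set V, S.ncard = k ∧ IsPercolating G r S}

/-- A vertex cover of `G`. -/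
def IsVertexCover (G : SimpleGraph V) (C : Set V) : Prop :=
  ∀ ⦃u v : V⦄, G.Adj u v → u ∈ C ∨ v ∈ C

/-- The vertex cover number β(G). -/
noncomputable def coverNumber (G : SimpleGraph V) : ℕ :=
  sInf {k | ∃ C : Set V, C.ncard = k ∧ _root_.IsVertexCover G C}

/-- An independent set of `G`. -/
def IsIndep (G : SimpleGraph V) (I : Set V) : Prop :=
  I.Pairwise fun u v => ¬ G.Adj u v

/-- The independence number α(G). -/
noncomputable def indepNumber (G : SimpleGraph V) : ℕ :=
  sSup {k | ∃ I : Set V, I.ncard = k ∧ IsIndep G I}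

/-- `G` has no induced `K_{1,3}`. -/
def ClawFree (G : SimpleGraph V) : Prop :=
  ¬ ∃ v a b c : V, a ≠ b ∧ a ≠ c ∧ b ≠ c ∧
    G.Adj v a ∧ G.Adj v b ∧ G.Adj v c ∧ ¬ G.Adj a b ∧ ¬ G.Adj a c ∧ ¬ G.Adj b c

/-- The set `T` is (the vertex set of) a triangle of `G`. -/
def IsTriangle (G : SimpleGraph V) (T : Set V) : Prop :=
  ∃ a b c : V, a ≠ b ∧ a ≠ c ∧ b ≠ c ∧
    G.Adj a b ∧ G.Adj a c ∧ G.Adj b c ∧ T = {a, b, c}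

/-- The set `D` induces a diamond (`K_4` minus the edge `ab`) in `G`. -/
def IsDiamond (G : SimpleGraph V) (D : Set V) : Prop :=
  ∃ a b c d : V, a ≠ b ∧ a ≠ c ∧ a ≠ d ∧ b ≠ c ∧ b ≠ d ∧ c ≠ d ∧
    ¬ G.Adj a b ∧ G.Adj a c ∧ G.Adj a d ∧ G.Adj b c ∧ G.Adj b d ∧ G.Adj c d ∧
    D = {a, b, c, d}

/-- `P` is a partition of the vertex set of `G` into sets each inducing a triangle
or a diamond (a triangle-diamond partition). -/
def IsTDPartition (G : SimpleGraph V) (P : Set (Set V)) : Prop :=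
  (∀ S ∈ P, IsTriangle G S ∨ IsDiamond G S) ∧ ∀ v : V, ∃! S : Set V, S ∈ P ∧ v ∈ S

/-- The diamond-necklace `N_k`: the vertex `(i, 0)` is `a_i`, `(i, 1)` is `b_i`,
`(i, 2)` is `c_i`, `(i, 3)` is `d_i`; inside each diamond all edges except `a_i b_i`
are present, and consecutive diamonds are linked by the edges `a_i b_{i+1}`. -/
def diamondNecklace (k : ℕ) : SimpleGraph (ZMod k × Fin 4) :=
  SimpleGraph.fromRel (fun x y =>
    (x.1 = y.1 ∧ ¬ (x.2 = 0 ∧ y.2 = 1) ∧ ¬ (x.2 = 1 ∧ y.2 = 0))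
    ∨ (y.1 = x.1 + 1 ∧ x.2 = 0 ∧ y.2 = 1))

/-- The triangle-necklace `F_{2k}`: the vertex `(j, 0)` is `x_{j+1}`, `(j, 1)` is `y_{j+1}`,
`(j, 2)` is `z_{j+1}`; each triple `{x,y,z}` with the same first coordinate is a triangle,
and the triangles are linked by the edges `x_{2i-1}x_{2i}`, `y_{2i-1}y_{2i}` and
`z_{2i}z_{2i+1}` (indices modulo `2k`). -/
def triangleNecklace (k : ℕ) : SimpleGraph (ZMod (2 * k) × Fin 3) :=
  SimpleGraph.fromRel (fun x y =>
    (x.1 = y.1 ∧ x.2 ≠ y.2)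
    ∨ (y.1 = x.1 + 1 ∧ Even x.1.val ∧ ((x.2 = 0 ∧ y.2 = 0) ∨ (x.2 = 1 ∧ y.2 = 1)))
    ∨ (y.1 = x.1 + 1 ∧ Odd x.1.val ∧ x.2 = 2 ∧ y.2 = 2))
theorem stmt0 {V : Type*} [Fintype V] (G : SimpleGraph V) (r : ℕ) (hr : 2 ≤ r)
    (hreg : ∀ v : V, (G.neighborSet v).ncard = r) :
    (∀ S : Set V, IsPercolating G r S ↔ _root_.IsVertexCover G S) ∧
    percNumber G r = coverNumber G ∧
    coverNumber G = Fintype.card V - indepNumber G := by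

  classical
  have hiff : ∀ S : Set V, IsPercolating G r S ↔ _root_.IsVertexCover G S := by
    intro S
    constructor
    · rintro ⟨n, hn⟩
      intro u v huv
      by_contra hc
      push_neg at hc
      obtain ⟨hu, hv⟩ := hc
      have key : ∀ m, u ∉ (percStep G r)^[m] S ∧ v ∉ (percStep G r)^[m] S := by
        intro m
        induction m with
        | zero => exact ⟨hu, hv⟩
        | succ m ih =>
          rw [Function.iterate_succ_apply']
          obtain ⟨hub, hvb⟩ := ih
          set B := (percStep G r)^[m] S with hB
          have main : ∀ w x : V, G.Adj w x → x ∉ B → w ∉ B → w ∉ percStep G r B := by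
            intro w x hadj hx hw
            simp only [percStep, Set.mem_union, Set.mem_setOf_eq]
            push_neg
            refine ⟨hw, ?_⟩
            have hss : G.neighborSet w ∩ B ⊂ G.neighborSet w := by
              refine ⟨Set.inter_subset_left, fun hsub => ?_⟩
              exact hx (hsub hadj ).2
            have hlt := Set.ncard_lt_ncard hss (Set.toFinite _)
            rw [hreg w] at hlt
            omega
          exact ⟨main u v huv hvb hub, main v u huv.symm hub hvb⟩
      obtain ⟨hu', _⟩ := key n
      rw [hn] at hu'
      exact hu' (Set.mem_univ u)
    · intro hcov
      refine ⟨1, ?_⟩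
      simp only [Function.iterate_one]
      ext w
      simp only [percStep, Set.mem_union, Set.mem_setOf_eq, Set.mem_univ, iff_true]
      by_cases hw : w ∈ S
      · exact Or.inl hw
      · right
        have hsub : G.neighborSet w ⊆ S := fun x hx => ((hcov hx).resolve_left hw)
        rw [Set.inter_eq_self_of_subset_left hsub, hreg w]
  refine ⟨hiff, ?_, ?_⟩
  · unfold percNumber coverNumber
    congr 1
    ext k
    simp only [Set.mem_setOf_eq]
    exact exists_congr fun S => and_congr_right fun _ => hiff S
  · -- Gallai
    have hcompl : ∀ s : Set V, s.ncard + sᶜ.ncard = Fintype.card V := by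
      intro s
      have := Set.ncard_add_ncard_compl s
      rwa [Nat.card_eq_fintype_card] at this
    have hle : ∀ s : Set V, s.ncard ≤ Fintype.card V := by
      intro s
      have := hcompl s
      omega
    have hcov_ind : ∀ C : Set V, _root_.IsVertexCover G C ↔ IsIndep G Cᶜ := by
      intro C
      constructor
      · intro h u hu v hv _ hadj
        rcases h hadj with h1 | h1
        · exact hu h1
        · exact hv h1
      · intro h u v hadj
        by_contra hc
        push_neg at hc
        exact h hc.1 hc.2 (G.ne_of_adj hadj) hadj
    set A := {k | ∃ C : Set V, C.ncard = k ∧ _root_.IsVertexCover G C} with hA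
    set B := {k | ∃ I : Set V, I.ncard = k ∧ IsIndep G I} with hBdef
    have hAne : A.Nonempty := ⟨(Set.univ : Set V).ncard, Set.univ, rfl, fun u v _ => Or.inl (Set.mem_univ u)⟩
    have hBne : B.Nonempty := ⟨(0 : ℕ), ∅, by simp, by intro u hu; simp at hu⟩
    have hBbdd : BddAbove B := by
      refine ⟨Fintype.card V, fun k hk => ?_⟩
      obtain ⟨I, hI, _⟩ := hk
      exact hI ▸ hle I
    -- β := sInf A, α := sSup B
    have hβmem : sInf A ∈ A := Nat.sInf_mem hAne
    have hαmem : sSup B ∈ B := Nat.sSup_mem hBne hBbdd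
    obtain ⟨C, hC, hCcov⟩ := hβmem
    obtain ⟨I, hI, hIind⟩ := hαmem
    have h1 : Fintype.card V - sInf A ≤ sSup B := by
      refine le_csSup hBbdd ⟨Cᶜ, ?_, (hcov_ind C).mp hCcov⟩
      have := hcompl C
      omega
    have h2 : sInf A ≤ Fintype.card V - sSup B := by
      refine Nat.sInf_le ⟨Iᶜ, ?_, ?_⟩
      · have := hcompl I
        omega
      · rw [hcov_ind, compl_compl]
        exact hIind
    have hαle : sSup B ≤ Fintype.card V := hI ▸ hle I
    have hβle : sInf A ≤ Fintype.card V := hC ▸ hle C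
    show sInf A = Fintype.card V - sSup B
    omega
end

section
/- If G is a claw-free graph on n vertices with minimum degree δ, then α(G) ≤ 2n/(δ + 2). -/
open SimpleGraph Set

variable {V : Type*}

theorem stmt3 {V : Type*} [Fintype V] (G : SimpleGraph V) [DecidableRel G.Adj]
    (hcf : ClawFree G) :
    (indepNumber G : ℝ) ≤ 2 * (Fintype.card V : ℝ) / ((G.minDegree : ℝ) + 2) := by
  classical
  -- obtain a maximum independent set
  have hmem : indepNumber G ∈ {k | ∃ I : Set V, I.ncard = k ∧ IsIndep G I} := by
    apply Nat.sSup_mem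
    · exact ⟨0, ∅, by simp, by simp [IsIndep]⟩
    · refine ⟨Fintype.card V, fun k hk => ?_⟩
      obtain ⟨I, hI, -⟩ := hk
      calc k = I.ncard := hI.symm
        _ ≤ (Set.univ : Set V).ncard := Set.ncard_le_ncard (Set.subset_univ I) Set.finite_univ
        _ = Fintype.card V := by rw [Set.ncard_univ, Nat.card_eq_fintype_card]
  obtain ⟨I, hIcard, hIind⟩ := hmem
  set IF : Finset V := I.toFinset with hIF
  have hIFcard : IF.card = indepNumber G := by
    rw [hIF, ← Set.ncard_eq_toFinset_card', hIcard]
  have hImem : ∀ v, v ∈ IF ↔ v ∈ I := fun v => Set.mem_toFinset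
  -- each vertex has at most 2 neighbors in I
  have hkey : ∀ u : V, (IF.filter (fun v => G.Adj v u)).card ≤ 2 := by
    intro u
    by_contra h
    push_neg at h
    obtain ⟨t, hts, htc⟩ := Finset.exists_subset_card_eq (show 3 ≤ _ from h)
    obtain ⟨a, b, c, hab, hac, hbc, rfl⟩ := Finset.card_eq_three.mp htc
    have ha : a ∈ IF.filter (fun v => G.Adj v u) := hts (by simp)
    have hb : b ∈ IF.filter (fun v => G.Adj v u) := hts (by simp)
    have hc : c ∈ IF.filter (fun v => G.Adj v u) := hts (by simp)
    simp only [Finset.mem_filter, hImem] at ha hb hc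
    exact hcf ⟨u, a, b, c, hab, hac, hbc, ha.2.symm, hb.2.symm, hc.2.symm,
      hIind ha.1 hb.1 hab, hIind ha.1 hc.1 hac, hIind hb.1 hc.1 hbc⟩
  have hzero : ∀ u ∈ IF, (IF.filter (fun v => G.Adj v u)).card = 0 := by
    intro u hu
    rw [Finset.card_eq_zero, Finset.filter_eq_empty_iff]
    intro v hv hadj
    rcases eq_or_ne v u with rfl | hne
    · exact G.irrefl hadj
    · exact hIind ((hImem v).mp hv) ((hImem u).mp hu) hne hadj
  -- double counting
  have h1 : ∑ v ∈ IF, G.degree v = ∑ u ∈ Finset.univ, (IF.filter (fun v => G.Adj v u)).card := by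
    simp_rw [Finset.card_filter]
    rw [Finset.sum_comm]
    refine Finset.sum_congr rfl fun v _ => ?_
    rw [← Finset.card_filter]
    rw [SimpleGraph.degree, SimpleGraph.neighborFinset_eq_filter]
  have h2 : ∑ u ∈ Finset.univ, (IF.filter (fun v => G.Adj v u)).card
      = ∑ u ∈ Finset.univ \ IF, (IF.filter (fun v => G.Adj v u)).card := by
    refine (Finset.sum_subset (Finset.sdiff_subset) ?_).symm
    intro u hu hnu
    exact hzero u (by simpa using hnu)
  have h3 : ∑ u ∈ Finset.univ \ IF, (IF.filter (fun v => G.Adj v u)).card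
      ≤ 2 * (Fintype.card V - IF.card) := by
    calc _ ≤ (Finset.univ \ IF).card * 2 :=
          Finset.sum_le_card_nsmul _ _ 2 (fun u _ => hkey u)
      _ = 2 * (Fintype.card V - IF.card) := by
          rw [Finset.card_sdiff_of_subset (Finset.subset_univ IF), Finset.card_univ, Nat.mul_comm]
  have h4 : G.minDegree * IF.card ≤ ∑ v ∈ IF, G.degree v := by
    calc G.minDegree * IF.card = IF.card * G.minDegree := Nat.mul_comm _ _
      _ ≤ ∑ v ∈ IF, G.degree v :=
          Finset.card_nsmul_le_sum _ _ _ (fun v _ => G.minDegree_le_degree v)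
  have hle : IF.card ≤ Fintype.card V := by
    simpa using Finset.card_le_card (Finset.subset_univ IF)
  have hmain : (G.minDegree + 2) * indepNumber G ≤ 2 * Fintype.card V := by
    rw [← hIFcard, add_mul]
    have h5 := h4.trans ((h1.trans h2).le.trans h3)
    omega
  -- transfer to ℝ
  rw [le_div_iff₀ (by positivity)]
  have : ((G.minDegree + 2) * indepNumber G : ℕ) ≤ ((2 * Fintype.card V : ℕ)) := hmain
  calc (indepNumber G : ℝ) * ((G.minDegree : ℝ) + 2)
      = ((G.minDegree + 2) * indepNumber G : ℕ) := by push_cast; ring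
    _ ≤ ((2 * Fintype.card V : ℕ) : ℝ) := by exact_mod_cast hmain
    _ = 2 * (Fintype.card V : ℝ) := by push_cast; ring
end

section
/- If G ≠ K_4 is a connected, claw-free, cubic graph of order n, then n/3 ≤ α(G) ≤ 2n/5. -/
open SimpleGraph Set

variable {V : Type*}

section StmtFourAux

open Finset in
private lemma stmt4_nf_card {V : Type*} [Fintype V] {G : SimpleGraph V} [DecidableRel G.Adj]
    (hcub : ∀ v : V, (G.neighborSet v).ncard = 3) (v : V) :
    (G.neighborFinset v).card = 3 := by
  rw [neighborFinset_def, ← Set.ncard_eq_toFinset_card']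
  exact hcub v

private lemma stmt4_closed_univ {V : Type*} [Fintype V] {G : SimpleGraph V}
    [DecidableRel G.Adj] (hconn : G.Connected) {t : Finset V}
    (hc : ∀ a ∈ t, G.neighborFinset a ⊆ t) {x : V} (hx : x ∈ t) (w : V) : w ∈ t := by
  have key : ∀ {a b : V}, G.Walk a b → a ∈ t → b ∈ t := by
    intro a b p
    induction p with
    | nil => exact id
    | cons h q ih => intro ha; exact ih (hc _ ha (by rwa [mem_neighborFinset]))
  obtain ⟨p⟩ := hconn x w
  exact key p hx

/-- Any independent finset in a claw-free cubic graph has at most `2n/5` elements. -/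
private lemma stmt4_upper {V : Type*} [Fintype V] [DecidableEq V] {G : SimpleGraph V}
    [DecidableRel G.Adj] (hcf : ClawFree G) (hcub : ∀ v : V, (G.neighborSet v).ncard = 3)
    (J : Finset V) (hJ : ∀ x ∈ J, ∀ y ∈ J, x ≠ y → ¬ G.Adj x y) :
    5 * J.card ≤ 2 * Fintype.card V := by
  classical
  have hswap : ∑ v ∈ J, (Jᶜ.filter (G.Adj v)).card
      = ∑ w ∈ Jᶜ, (J.filter (fun v => G.Adj v w)).card := by
    simp only [Finset.card_filter]
    exact Finset.sum_comm
  have h1 : ∀ v ∈ J, (Jᶜ.filter (G.Adj v)).card = 3 := by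
    intro v hv
    have : Jᶜ.filter (G.Adj v) = G.neighborFinset v := by
      ext w
      simp only [Finset.mem_filter, Finset.mem_compl, mem_neighborFinset]
      constructor
      · rintro ⟨-, h⟩; exact h
      · intro h
        exact ⟨fun hw => hJ v hv w hw (G.ne_of_adj h) h, h⟩
    rw [this]; exact stmt4_nf_card hcub v
  have h2 : ∀ w ∈ Jᶜ, (J.filter (fun v => G.Adj v w)).card ≤ 2 := by
    intro w _
    by_contra hcon
    push_neg at hcon
    obtain ⟨t, ht, htc⟩ := Finset.exists_subset_card_eq hcon
    obtain ⟨a, b, c, hab, hac, hbc, rfl⟩ := Finset.card_eq_three.mp htc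
    have ha := ht (by simp : a ∈ ({a,b,c} : Finset V))
    have hb := ht (by simp : b ∈ ({a,b,c} : Finset V))
    have hc := ht (by simp : c ∈ ({a,b,c} : Finset V))
    simp only [Finset.mem_filter] at ha hb hc
    exact hcf ⟨w, a, b, c, hab, hac, hbc, ha.2.symm, hb.2.symm, hc.2.symm,
      hJ a ha.1 b hb.1 hab, hJ a ha.1 c hc.1 hac, hJ b hb.1 c hc.1 hbc⟩
  have e1 : ∑ v ∈ J, (Jᶜ.filter (G.Adj v)).card = 3 * J.card := by
    rw [Finset.sum_congr rfl h1, Finset.sum_const, smul_eq_mul, mul_comm]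
  have e2 : ∑ w ∈ Jᶜ, (J.filter (fun v => G.Adj v w)).card ≤ 2 * Jᶜ.card := by
    calc ∑ w ∈ Jᶜ, (J.filter (fun v => G.Adj v w)).card ≤ ∑ _w ∈ Jᶜ, 2 :=
          Finset.sum_le_sum h2
      _ = 2 * Jᶜ.card := by rw [Finset.sum_const, smul_eq_mul, mul_comm]
  have hcompl : Jᶜ.card = Fintype.card V - J.card := Finset.card_compl J
  have hle : J.card ≤ Fintype.card V := Finset.card_le_univ J
  have : 3 * J.card ≤ 2 * (Fintype.card V - J.card) := by
    rw [← e1, hswap, ← hcompl]; exact e2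
  omega

/-- Deletion induction: if every nonempty subset of `s` has a vertex with a neighbor
outside it, then `s` contains an independent set of size at least `|s|/3`. -/
private lemma stmt4_lemB {V : Type*} [Fintype V] [DecidableEq V] {G : SimpleGraph V}
    [DecidableRel G.Adj] (hcub : ∀ v : V, (G.neighborSet v).ncard = 3) :
    ∀ (n : ℕ) (s : Finset V), s.card ≤ n →
    (∀ t ⊆ s, t.Nonempty → ∃ a ∈ t, ¬ G.neighborFinset a ⊆ t) →
    ∃ I ⊆ s, (∀ x ∈ I, ∀ y ∈ I, x ≠ y → ¬ G.Adj x y) ∧ s.card ≤ 3 * I.card := by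
  intro n
  induction n with
  | zero =>
    intro s hs _
    refine ⟨∅, Finset.empty_subset s, by simp, ?_⟩
    simp [Nat.le_zero.mp hs]
  | succ n ih =>
    intro s hs H
    rcases Finset.eq_empty_or_nonempty s with rfl | hne
    · exact ⟨∅, by simp, by simp, by simp⟩
    obtain ⟨v, hv, hnv⟩ := H s (Finset.Subset.refl s) hne
    have hdeg : (G.neighborFinset v ∩ s).card ≤ 2 := by
      have hss : G.neighborFinset v ∩ s ⊆ G.neighborFinset v := Finset.inter_subset_left
      have hne2 : G.neighborFinset v ∩ s ≠ G.neighborFinset v := by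
        intro h
        refine hnv (fun a ha => ?_)
        have h2 : a ∈ G.neighborFinset v ∩ s := by rw [h]; exact ha
        exact (Finset.mem_inter.mp h2).2
      have := Finset.card_lt_card (lt_of_le_of_ne hss hne2)
      rw [stmt4_nf_card hcub v] at this
      omega
    set K := insert v (G.neighborFinset v ∩ s) with hK
    have hKcard : K.card ≤ 3 := by
      calc K.card ≤ (G.neighborFinset v ∩ s).card + 1 := Finset.card_insert_le _ _
        _ ≤ 3 := by omega
    set s' := s \ K with hs'
    have hs'sub : s' ⊆ s := Finset.sdiff_subset
    have hvK : v ∈ K := Finset.mem_insert_self _ _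
    have hKs : K ⊆ s := by
      intro a ha
      rcases Finset.mem_insert.mp ha with rfl | ha
      · exact hv
      · exact (Finset.mem_inter.mp ha).2
    have hs'lt : s'.card < s.card :=
      Finset.card_lt_card (Finset.sdiff_ssubset hKs ⟨v, hvK⟩)
    have H' : ∀ t ⊆ s', t.Nonempty → ∃ a ∈ t, ¬ G.neighborFinset a ⊆ t :=
      fun t ht hnt => H t (ht.trans hs'sub) hnt
    obtain ⟨I, hIsub, hIind, hIcard⟩ := ih s' (by omega) H'
    have hvI : v ∉ I := fun h => (Finset.mem_sdiff.mp (hIsub h)).2 hvK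
    refine ⟨insert v I, ?_, ?_, ?_⟩
    · intro x hx
      rcases Finset.mem_insert.mp hx with rfl | hx
      · exact hv
      · exact hs'sub (hIsub hx)
    · intro x hx y hy hxy
      have nadj : ∀ z ∈ I, ¬ G.Adj v z := by
        intro z hz hadj
        have hzs : z ∈ s := hs'sub (hIsub hz)
        have : z ∈ K := Finset.mem_insert_of_mem
          (Finset.mem_inter.mpr ⟨(mem_neighborFinset G v z).mpr hadj, hzs⟩)
        exact (Finset.mem_sdiff.mp (hIsub hz)).2 this
      rcases Finset.mem_insert.mp hx with hx' | hx' <;>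
        rcases Finset.mem_insert.mp hy with hy' | hy'
      · exact absurd (hx'.trans hy'.symm) hxy
      · rw [hx']; exact nadj y hy'
      · rw [hy']; exact fun h => nadj x hx' h.symm
      · exact hIind x hx' y hy' hxy
    · have hcard1 : s.card ≤ s'.card + K.card := by
        calc s.card ≤ (s ∪ K).card := Finset.card_le_card Finset.subset_union_left
          _ = s'.card + K.card := (Finset.card_sdiff_add_card s K).symm
      have : (insert v I).card = I.card + 1 := Finset.card_insert_of_notMem hvI
      omega

private lemma stmt4_nf_eq_of_adj {V : Type*} [Fintype V] [DecidableEq V] {G : SimpleGraph V}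
    [DecidableRel G.Adj] (hcub : ∀ v : V, (G.neighborSet v).ncard = 3)
    {x p q r : V} (h1 : G.Adj x p) (h2 : G.Adj x q) (h3 : G.Adj x r)
    (hpq : p ≠ q) (hpr : p ≠ r) (hqr : q ≠ r) : G.neighborFinset x = {p, q, r} := by
  have hsub : ({p, q, r} : Finset V) ⊆ G.neighborFinset x := by
    intro z hz
    simp only [Finset.mem_insert, Finset.mem_singleton] at hz
    rcases hz with rfl | rfl | rfl <;> rwa [mem_neighborFinset]
  refine (Finset.eq_of_subset_of_card_le hsub ?_).symm
  rw [stmt4_nf_card hcub x, Finset.card_insert_of_notMem (by simp [hpq, hpr]),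
    Finset.card_insert_of_notMem (by simp [hqr]), Finset.card_singleton]

/-- A `K_4` inside a connected cubic graph forces the whole graph to be `K_4`. -/
private lemma stmt4_K4_case {V : Type*} [Fintype V] [DecidableEq V] {G : SimpleGraph V}
    [DecidableRel G.Adj] (hconn : G.Connected)
    (hcub : ∀ v : V, (G.neighborSet v).ncard = 3)
    (hK4 : ¬ Nonempty (G ≃g (⊤ : SimpleGraph (Fin 4))))
    {v a b c : V} (hav : G.Adj v a) (hbv : G.Adj v b) (hcv : G.Adj v c)
    (hab : G.Adj a b) (hac : G.Adj a c) (hbc : G.Adj b c) : False := by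
  set K : Finset V := {v, a, b, c} with hK
  have hvK : v ∈ K := by simp [hK]
  have hclosed : ∀ x ∈ K, G.neighborFinset x ⊆ K := by
    intro x hx
    have hsubK : ∀ {p q r : V}, p ∈ K → q ∈ K → r ∈ K →
        ({p, q, r} : Finset V) ⊆ K := by
      intro p q r hp hq hr z hz
      simp only [Finset.mem_insert, Finset.mem_singleton] at hz
      rcases hz with rfl | rfl | rfl <;> assumption
    have haK : a ∈ K := by simp [hK]
    have hbK : b ∈ K := by simp [hK]
    have hcK : c ∈ K := by simp [hK]
    simp only [hK, Finset.mem_insert, Finset.mem_singleton] at hx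
    rcases hx with rfl | rfl | rfl | rfl
    · rw [stmt4_nf_eq_of_adj hcub hav hbv hcv hab.ne hac.ne hbc.ne]
      exact hsubK haK hbK hcK
    · rw [stmt4_nf_eq_of_adj hcub hav.symm hab hac hbv.ne hcv.ne hbc.ne]
      exact hsubK hvK hbK hcK
    · rw [stmt4_nf_eq_of_adj hcub hbv.symm hab.symm hbc hav.ne hcv.ne hac.ne]
      exact hsubK hvK haK hcK
    · rw [stmt4_nf_eq_of_adj hcub hcv.symm hac.symm hbc.symm hav.ne hbv.ne hab.ne]
      exact hsubK hvK haK hbK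
  have huniv : ∀ x : V, x ∈ K := stmt4_closed_univ hconn hclosed hvK
  have hKuniv : K = Finset.univ := Finset.eq_univ_iff_forall.mpr huniv
  have h4 : Fintype.card V = 4 := by
    rw [← Finset.card_univ, ← hKuniv, hK]
    rw [Finset.card_insert_of_notMem (by simp [hav.ne, hbv.ne, hcv.ne]),
      Finset.card_insert_of_notMem (by simp [hab.ne, hac.ne]),
      Finset.card_insert_of_notMem (by simp [hbc.ne]), Finset.card_singleton]
  have hadj : ∀ x y : V, x ≠ y → G.Adj x y := by
    intro x y hxy
    have hx := huniv x; have hy := huniv y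
    simp only [hK, Finset.mem_insert, Finset.mem_singleton] at hx hy
    rcases hx with rfl | rfl | rfl | rfl <;> rcases hy with rfl | rfl | rfl | rfl <;>
      first
        | exact absurd rfl hxy
        | assumption
        | exact G.adj_symm (by assumption)
  refine hK4 ⟨⟨Fintype.equivFinOfCardEq h4, ?_⟩⟩
  intro x y
  simp only [top_adj, ne_eq, EmbeddingLike.apply_eq_iff_eq]
  exact ⟨fun h => hadj x y h, fun h => h.ne⟩

private lemma stmt4_caseB {V : Type*} [Fintype V] [DecidableEq V] {G : SimpleGraph V}
    [DecidableRel G.Adj] (hconn : G.Connected) (hcf : ClawFree G)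
    (hcub : ∀ v : V, (G.neighborSet v).ncard = 3)
    (hK4 : ¬ Nonempty (G ≃g (⊤ : SimpleGraph (Fin 4))))
    (hng : ∀ u v : V, u ≠ v → ¬ G.Adj u v →
      (G.neighborFinset u ∩ G.neighborFinset v).card ≤ 1) :
    ∃ J : Finset V, (∀ x ∈ J, ∀ y ∈ J, x ≠ y → ¬ G.Adj x y) ∧
      Fintype.card V = 3 * J.card := by
  classical
  -- no vertex has two adjacent pairs among its neighbors
  have helper : ∀ v x y z : V, G.Adj v x → G.Adj v y → G.Adj v z → x ≠ y → x ≠ z → y ≠ z →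
      G.Adj x y → G.Adj x z → False := by
    intro v x y z hvx hvy hvz hxy hxz hyz haxy haxz
    by_cases hyz' : G.Adj y z
    · exact stmt4_K4_case hconn hcub hK4 hvx hvy hvz haxy haxz hyz'
    · have h2 : ({v, x} : Finset V) ⊆ G.neighborFinset y ∩ G.neighborFinset z := by
        intro w hw
        simp only [Finset.mem_insert, Finset.mem_singleton] at hw
        rcases hw with rfl | rfl
        · exact Finset.mem_inter.mpr ⟨(mem_neighborFinset G y w).mpr hvy.symm,
            (mem_neighborFinset G z w).mpr hvz.symm⟩
        · exact Finset.mem_inter.mpr ⟨(mem_neighborFinset G y w).mpr haxy.symm,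
            (mem_neighborFinset G z w).mpr haxz.symm⟩
      have hc2 : ({v, x} : Finset V).card = 2 := by
        rw [Finset.card_insert_of_notMem (by simp [hvx.ne]), Finset.card_singleton]
      have := Finset.card_le_card h2
      have := hng y z hyz hyz'
      omega
  -- each vertex has a unique adjacent pair among its three neighbors
  have main : ∀ v : V, ∃ p q r : V, G.neighborFinset v = {p, q, r} ∧ p ≠ q ∧ p ≠ r ∧ q ≠ r ∧
      G.Adj p q ∧ ¬ G.Adj p r ∧ ¬ G.Adj q r := by
    intro v
    obtain ⟨a, b, c, hab, hac, hbc, hN⟩ := Finset.card_eq_three.mp (stmt4_nf_card hcub v)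
    have hva : G.Adj v a := by rw [← mem_neighborFinset, hN]; simp
    have hvb : G.Adj v b := by rw [← mem_neighborFinset, hN]; simp
    have hvc : G.Adj v c := by rw [← mem_neighborFinset, hN]; simp

    by_cases h1 : G.Adj a b
    · refine ⟨a, b, c, hN, hab, hac, hbc, h1, ?_, ?_⟩
      · exact fun h => helper v a b c hva hvb hvc hab hac hbc h1 h
      · exact fun h => helper v b a c hvb hva hvc hab.symm hbc hac h1.symm h
    · by_cases h2 : G.Adj a c
      · refine ⟨a, c, b, ?_, hac, hab, Ne.symm hbc, h2, h1, ?_⟩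
        · rw [hN]; ext z; simp only [Finset.mem_insert, Finset.mem_singleton]; tauto
        · exact fun h => helper v c a b hvc hva hvb (Ne.symm hac) (Ne.symm hbc) hab h2.symm h
      · by_cases h3 : G.Adj b c
        · refine ⟨b, c, a, ?_, hbc, Ne.symm hab, Ne.symm hac, h3, ?_, ?_⟩
          · rw [hN]; ext z; simp only [Finset.mem_insert, Finset.mem_singleton]; tauto
          · exact fun h => h1 h.symm
          · exact fun h => h2 h.symm
        · exact (hcf ⟨v, a, b, c, hab, hac, hbc, hva, hvb, hvc, h1, h2, h3⟩).elim
  choose pa pb pc hN hd1 hd2 hd3 hadj hna hnb using main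
  set T : V → Finset V := fun v => {v, pa v, pb v} with hT
  -- basic adjacency facts
  have hmemN : ∀ v y : V, G.Adj v y ↔ (y = pa v ∨ y = pb v ∨ y = pc v) := by
    intro v y
    rw [← mem_neighborFinset, hN v]
    simp only [Finset.mem_insert, Finset.mem_singleton]
  have hadjpa : ∀ v, G.Adj v (pa v) := fun v => (hmemN v (pa v)).mpr (Or.inl rfl)
  have hadjpb : ∀ v, G.Adj v (pb v) := fun v => (hmemN v (pb v)).mpr (Or.inr (Or.inl rfl))
  have hadjpc : ∀ v, G.Adj v (pc v) := fun v => (hmemN v (pc v)).mpr (Or.inr (Or.inr rfl))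
  -- unique adjacent pair
  have funiq : ∀ v x y : V, G.Adj v x → G.Adj v y → x ≠ y → G.Adj x y →
      (x = pa v ∧ y = pb v) ∨ (x = pb v ∧ y = pa v) := by
    intro v x y hvx hvy hxy hxyadj
    rcases (hmemN v x).mp hvx with rfl | rfl | rfl <;>
      rcases (hmemN v y).mp hvy with h | h | h
    · exact absurd h.symm hxy
    · exact Or.inl ⟨rfl, h⟩
    · exact absurd (h ▸ hxyadj) (hna v)
    · exact Or.inr ⟨rfl, h⟩
    · exact absurd h.symm hxy
    · exact absurd (h ▸ hxyadj) (hnb v)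
    · exact absurd (h ▸ hxyadj).symm (hna v)
    · exact absurd (h ▸ hxyadj).symm (hnb v)
    · exact absurd h.symm hxy
  have hmemT : ∀ v, v ∈ T v := by intro v; simp [hT]
  have hmemTiff : ∀ v w : V, w ∈ T v ↔ (w = v ∨ w = pa v ∨ w = pb v) := by
    intro v w; simp [hT]
  -- triangle well-definedness
  have fTeq : ∀ v w : V, w ∈ T v → T w = T v := by
    intro v w hw
    rcases (hmemTiff v w).mp hw with rfl | hw' | hw'
    · rfl
    · subst hw'
      have h := funiq (pa v) v (pb v) (hadjpa v).symm (hadj v) (hadjpb v).ne (hadjpb v)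
      rcases h with ⟨e1, e2⟩ | ⟨e1, e2⟩ <;>
      · ext z
        simp only [hT, Finset.mem_insert, Finset.mem_singleton, ← e1, ← e2]
        tauto
    · subst hw'
      have h := funiq (pb v) v (pa v) (hadjpb v).symm (hadj v).symm (hadjpa v).ne (hadjpa v)
      rcases h with ⟨e1, e2⟩ | ⟨e1, e2⟩ <;>
      · ext z
        simp only [hT, Finset.mem_insert, Finset.mem_singleton, ← e1, ← e2]
        tauto
  have hmnotT : ∀ v, pc v ∉ T v := by
    intro v
    simp only [hmemTiff]
    push_neg
    exact ⟨(hadjpc v).ne', Ne.symm (hd2 v), Ne.symm (hd3 v)⟩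
  have hedgechar : ∀ x y : V, G.Adj x y → y ∈ T x ∨ y = pc x := by
    intro x y h
    rcases (hmemN x y).mp h with rfl | rfl | rfl
    · exact Or.inl (by simp [hT])
    · exact Or.inl (by simp [hT])
    · exact Or.inr rfl
  have hcardT : ∀ v, (T v).card = 3 := by
    intro v
    rw [hT]
    rw [Finset.card_insert_of_notMem (by simp [(hadjpa v).ne, (hadjpb v).ne]),
      Finset.card_insert_of_notMem (by simp [hd1 v]), Finset.card_singleton]
  set 𝒯 : Finset (Finset V) := Finset.image T Finset.univ with h𝒯
  have hTmem𝒯 : ∀ v, T v ∈ 𝒯 := fun v => Finset.mem_image_of_mem T (Finset.mem_univ v)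
  have g2 : ∀ T' ∈ 𝒯, ∀ x ∈ T', T x = T' := by
    intro T' hT' x hx
    obtain ⟨w, -, rfl⟩ := Finset.mem_image.mp hT'
    exact fTeq w x hx
  -- the vertex set is partitioned into the triangles
  have g3 : Fintype.card V = 3 * 𝒯.card := by
    have hdisj : ∀ T1 ∈ 𝒯, ∀ T2 ∈ 𝒯, T1 ≠ T2 → Disjoint T1 T2 := by
      intro T1 h1 T2 h2 hne
      rw [Finset.disjoint_left]
      intro x hx1 hx2
      exact hne ((g2 T1 h1 x hx1).symm.trans (g2 T2 h2 x hx2))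
    have huniv : (Finset.univ : Finset V) = 𝒯.biUnion (fun S => S) := by
      ext x
      simp only [Finset.mem_univ, true_iff, Finset.mem_biUnion]
      exact ⟨T x, hTmem𝒯 x, hmemT x⟩
    rw [← Finset.card_univ, huniv, Finset.card_biUnion hdisj]
    rw [Finset.sum_congr rfl (fun T' hT' => ?_), Finset.sum_const, smul_eq_mul, mul_comm]
    obtain ⟨w, -, rfl⟩ := Finset.mem_image.mp hT'
    exact hcardT w
  -- Hall's theorem setup
  set tE : {S // S ∈ 𝒯} → Finset (Sym2 V) :=
    fun S => S.1.image (fun x => s(x, pc x)) with htE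
  have hedge_inj : ∀ S ∈ 𝒯, ∀ x ∈ S, ∀ y ∈ S, s(x, pc x) = s(y, pc y) → x = y := by
    intro S hS x hx y hy he
    rcases Sym2.eq_iff.mp he with ⟨e1, -⟩ | ⟨e1, e2⟩
    · exact e1
    · exfalso
      have hTy : T y = S := g2 S hS y hy
      have : x ∈ T y := hTy ▸ hx
      rw [e1] at this
      exact hmnotT y this
  have htEcard : ∀ S : {S // S ∈ 𝒯}, (tE S).card = 3 := by
    intro S
    rw [htE, Finset.card_image_of_injOn (fun x hx y hy => hedge_inj S.1 S.2 x hx y hy)]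
    obtain ⟨w, -, hw⟩ := Finset.mem_image.mp S.2
    rw [← hw]
    exact hcardT w
  have hall : ∀ s : Finset {S // S ∈ 𝒯}, s.card ≤ (s.biUnion tE).card := by
    intro s
    set E := s.biUnion tE with hE
    have hsum : 3 * s.card = ∑ S ∈ s, (tE S).card := by
      rw [Finset.sum_congr rfl (fun S _ => htEcard S), Finset.sum_const, smul_eq_mul,
        mul_comm]
    have hsub : ∀ S ∈ s, tE S ⊆ E := fun S hS => Finset.subset_biUnion_of_mem tE hS
    have hstep : ∀ S ∈ s, (tE S).card = ∑ e ∈ E, if e ∈ tE S then 1 else 0 := by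
      intro S hS
      rw [← Finset.card_filter]
      congr 1
      ext e
      simp only [Finset.mem_filter]
      exact ⟨fun h => ⟨hsub S hS h, h⟩, fun h => h.2⟩
    have hswap : ∑ S ∈ s, (tE S).card = ∑ e ∈ E, (s.filter (fun S => e ∈ tE S)).card := by
      rw [Finset.sum_congr rfl hstep, Finset.sum_comm]
      exact Finset.sum_congr rfl (fun e _ => (Finset.card_filter _ _).symm)
    have hfiber : ∀ e ∈ E, (s.filter (fun S => e ∈ tE S)).card ≤ 2 := by
      intro e he
      obtain ⟨S0, -, he0⟩ := Finset.mem_biUnion.mp he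
      obtain ⟨z, -, hz⟩ := Finset.mem_image.mp he0
      have hfsub : s.filter (fun S => e ∈ tE S) ⊆
          {⟨T z, hTmem𝒯 z⟩, ⟨T (pc z), hTmem𝒯 (pc z)⟩} := by
        intro S' hS'
        have he' : e ∈ tE S' := (Finset.mem_filter.mp hS').2
        obtain ⟨y, hy, hyz⟩ := Finset.mem_image.mp he'
        have hTy : T y = S'.1 := g2 S'.1 S'.2 y hy
        rw [← hz] at hyz
        simp only [Finset.mem_insert, Finset.mem_singleton]
        rcases Sym2.eq_iff.mp hyz with ⟨e1, -⟩ | ⟨e1, e2⟩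
        · left; apply Subtype.ext; rw [← hTy, e1]
        · right; apply Subtype.ext; rw [← hTy, e1]
      calc (s.filter (fun S => e ∈ tE S)).card ≤ _ := Finset.card_le_card hfsub
        _ ≤ 2 := by
          apply le_trans (Finset.card_insert_le _ _)
          simp
    have hfinal : 3 * s.card ≤ 2 * E.card := by
      rw [hsum, hswap]
      calc ∑ e ∈ E, (s.filter (fun S => e ∈ tE S)).card ≤ ∑ _e ∈ E, 2 :=
        Finset.sum_le_sum hfiber
        _ = 2 * E.card := by rw [Finset.sum_const, smul_eq_mul, mul_comm]
    omega
  obtain ⟨f, hfinj, hf⟩ := (Finset.all_card_le_biUnion_card_iff_exists_injective tE).mp hall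
  have hrep : ∀ S : {S // S ∈ 𝒯}, ∃ x, x ∈ S.1 ∧ f S = s(x, pc x) := by
    intro S
    obtain ⟨x, hx, he⟩ := Finset.mem_image.mp (hf S)
    exact ⟨x, hx, he.symm⟩
  choose rep hrep1 hrep2 using hrep
  have hTrep : ∀ S : {S // S ∈ 𝒯}, T (rep S) = S.1 :=
    fun S => g2 S.1 S.2 (rep S) (hrep1 S)
  have hrepinj : Function.Injective rep := by
    intro S1 S2 h
    apply Subtype.ext
    rw [← hTrep S1, ← hTrep S2, h]
  refine ⟨Finset.image rep Finset.univ, ?_, ?_⟩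
  · intro x hx y hy hxy hadjxy
    obtain ⟨S1, -, rfl⟩ := Finset.mem_image.mp hx
    obtain ⟨S2, -, rfl⟩ := Finset.mem_image.mp hy
    have hS12 : S1 ≠ S2 := fun h => hxy (by rw [h])
    -- adjacency between reps of distinct triangles
    rcases hedgechar _ _ hadjxy with hmem | heq
    · apply hS12
      apply Subtype.ext
      rw [← hTrep S1, ← hTrep S2, fTeq (rep S1) (rep S2) hmem]
    · -- rep S2 = pc (rep S1)
      rcases hedgechar _ _ hadjxy.symm with hmem2 | heq2
      · have h1 : T (rep S1) = T (rep S2) := fTeq (rep S2) (rep S1) hmem2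
        apply hS12
        apply Subtype.ext
        rw [← hTrep S1, ← hTrep S2, h1]
      · -- rep S1 = pc (rep S2) and rep S2 = pc (rep S1)
        apply hS12
        apply hfinj
        rw [hrep2 S1, hrep2 S2, ← heq, ← heq2]
        exact Sym2.eq_swap
  · rw [g3]
    congr 1
    rw [Finset.card_image_of_injective _ hrepinj, Finset.card_univ, Fintype.card_coe]


/-- Lower bound: a connected claw-free cubic graph other than `K_4` has an independent
set of size at least `n/3`. -/
private lemma stmt4_lower {V : Type*} [Fintype V] [DecidableEq V] {G : SimpleGraph V}
    [DecidableRel G.Adj] (hconn : G.Connected) (hcf : ClawFree G)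
    (hcub : ∀ v : V, (G.neighborSet v).ncard = 3)
    (hK4 : ¬ Nonempty (G ≃g (⊤ : SimpleGraph (Fin 4)))) :
    ∃ J : Finset V, (∀ x ∈ J, ∀ y ∈ J, x ≠ y → ¬ G.Adj x y) ∧
      Fintype.card V ≤ 3 * J.card := by
  classical
  by_cases hgp : ∃ u v : V, u ≠ v ∧ ¬ G.Adj u v ∧
      2 ≤ (G.neighborFinset u ∩ G.neighborFinset v).card
  · obtain ⟨u, v, huv, hnadj, hcommon⟩ := hgp
    set K := insert u (insert v (G.neighborFinset u ∪ G.neighborFinset v)) with hKdef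
    set s := Finset.univ \ K with hsdef
    have hus : u ∉ s := by simp [hsdef, hKdef]
    have hvs : v ∉ s := by simp [hsdef, hKdef]
    have H : ∀ t ⊆ s, t.Nonempty → ∃ a ∈ t, ¬ G.neighborFinset a ⊆ t := by
      intro t ht ⟨x, hx⟩
      by_contra h
      push_neg at h
      exact hus (ht (stmt4_closed_univ hconn h hx u))
    obtain ⟨I, hIs, hIind, hIcard⟩ := stmt4_lemB hcub s.card s le_rfl H
    have hKcard : K.card ≤ 6 := by
      have h1 : (G.neighborFinset u ∪ G.neighborFinset v).card ≤ 4 := by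
        have := Finset.card_union_add_card_inter (G.neighborFinset u) (G.neighborFinset v)
        rw [stmt4_nf_card hcub u, stmt4_nf_card hcub v] at this
        omega
      calc K.card ≤ (insert v (G.neighborFinset u ∪ G.neighborFinset v)).card + 1 :=
            Finset.card_insert_le _ _
        _ ≤ ((G.neighborFinset u ∪ G.neighborFinset v).card + 1) + 1 := by
            have := Finset.card_insert_le v (G.neighborFinset u ∪ G.neighborFinset v)
            omega
        _ ≤ 6 := by omega
    have hscard : Fintype.card V ≤ s.card + 6 := by
      have h1 : s.card = Fintype.card V - K.card := by
        rw [hsdef, Finset.card_sdiff_of_subset (Finset.subset_univ K), Finset.card_univ]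
      have h2 : K.card ≤ Fintype.card V := Finset.card_le_univ K
      omega
    have hnadjI : ∀ w ∈ I, ¬ G.Adj u w ∧ ¬ G.Adj v w := by
      intro w hw
      have hws : w ∈ s := hIs hw
      constructor
      · intro h
        have : w ∈ K := by
          simp only [hKdef, Finset.mem_insert, Finset.mem_union, mem_neighborFinset]
          tauto
        exact (Finset.mem_sdiff.mp hws).2 this
      · intro h
        have : w ∈ K := by
          simp only [hKdef, Finset.mem_insert, Finset.mem_union, mem_neighborFinset]
          tauto
        exact (Finset.mem_sdiff.mp hws).2 this
    have huI : u ∉ I := fun h => hus (hIs h)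
    have hvI : v ∉ I := fun h => hvs (hIs h)
    refine ⟨insert u (insert v I), ?_, ?_⟩
    · intro x hx y hy hxy
      simp only [Finset.mem_insert] at hx hy
      rcases hx with hx' | hx' | hx' <;> rcases hy with hy' | hy' | hy'
      · exact absurd (hx'.trans hy'.symm) hxy
      · rw [hx', hy']; exact hnadj
      · rw [hx']; exact (hnadjI y hy').1
      · rw [hx', hy']; exact fun h => hnadj h.symm
      · exact absurd (hx'.trans hy'.symm) hxy
      · rw [hx']; exact (hnadjI y hy').2
      · rw [hy']; exact fun h => (hnadjI x hx').1 h.symm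
      · rw [hy']; exact fun h => (hnadjI x hx').2 h.symm
      · exact hIind x hx' y hy' hxy
    · have hc1 : (insert u (insert v I)).card = I.card + 2 := by
        rw [Finset.card_insert_of_notMem (by simp [huv, huI]),
          Finset.card_insert_of_notMem hvI]
      omega
  · push_neg at hgp
    have hng : ∀ u v : V, u ≠ v → ¬ G.Adj u v →
        (G.neighborFinset u ∩ G.neighborFinset v).card ≤ 1 := by
      intro u v h1 h2
      have := hgp u v h1 h2
      omega
    obtain ⟨J, hJind, hJcard⟩ := stmt4_caseB hconn hcf hcub hK4 hng
    exact ⟨J, hJind, le_of_eq hJcard⟩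

end StmtFourAux

theorem stmt4 {V : Type*} [Fintype V] (G : SimpleGraph V)
    (hconn : G.Connected) (hcf : ClawFree G)
    (hcub : ∀ v : V, (G.neighborSet v).ncard = 3)
    (hK4 : ¬ Nonempty (G ≃g (⊤ : SimpleGraph (Fin 4)))) :
    (Fintype.card V : ℝ) / 3 ≤ (indepNumber G : ℝ) ∧
    (indepNumber G : ℝ) ≤ 2 * (Fintype.card V : ℝ) / 5 := by
  classical
  set n := Fintype.card V with hn
  set S := {k | ∃ I : Set V, I.ncard = k ∧ IsIndep G I} with hS
  have hbdd : BddAbove S := by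
    refine ⟨n, fun k hk => ?_⟩
    obtain ⟨I, hI, -⟩ := hk
    rw [← hI]
    calc I.ncard ≤ (Set.univ : Set V).ncard :=
          Set.ncard_le_ncard (Set.subset_univ I) (Set.toFinite _)
      _ = n := by rw [Set.ncard_univ, Nat.card_eq_fintype_card]
  have hne : S.Nonempty := ⟨0, ∅, by simp, by simp [IsIndep]⟩
  have halpha : indepNumber G ∈ S := Nat.sSup_mem hne hbdd
  constructor
  · -- lower bound
    obtain ⟨J, hJind, hJcard⟩ := stmt4_lower hconn hcf hcub hK4
    have hJS : (J.card : ℕ) ∈ S := by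
      refine ⟨(↑J : Set V), Set.ncard_coe_finset J, ?_⟩
      intro x hx y hy hxy
      exact hJind x (by exact_mod_cast hx) y (by exact_mod_cast hy) hxy
    have h1 : J.card ≤ indepNumber G := le_csSup hbdd hJS
    have h2 : n ≤ 3 * indepNumber G := le_trans hJcard (by omega)
    rw [div_le_iff₀ (by norm_num : (0:ℝ) < 3)]
    calc (n : ℝ) ≤ 3 * (indepNumber G : ℝ) := by exact_mod_cast h2
      _ = (indepNumber G : ℝ) * 3 := by ring
  · -- upper bound
    obtain ⟨I, hIcard, hIind⟩ := halpha
    have hfin : I.Finite := Set.toFinite I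
    set J := hfin.toFinset with hJ
    have hJcard : J.card = indepNumber G := by
      rw [← hIcard, Set.ncard_eq_toFinset_card I hfin]
    have hJind : ∀ x ∈ J, ∀ y ∈ J, x ≠ y → ¬ G.Adj x y := by
      intro x hx y hy hxy
      exact hIind (hfin.mem_toFinset.mp hx) (hfin.mem_toFinset.mp hy) hxy
    have h5 : 5 * indepNumber G ≤ 2 * n := by
      rw [← hJcard]
      exact stmt4_upper hcf hcub J hJind
    rw [le_div_iff₀ (by norm_num : (0:ℝ) < 5)]
    calc (indepNumber G : ℝ) * 5 = 5 * (indepNumber G : ℝ) := by ring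
      _ ≤ 2 * (n : ℝ) := by exact_mod_cast h5
end

section
/- If G ≠ K_4 is a connected, claw-free, cubic graph of order n, then 3n/5 ≤ m(G,3) ≤ 2n/3. -/
open SimpleGraph Set

variable {V : Type*}

section AuxPerc
variable [Fintype V] (G : SimpleGraph V)

lemma aux_nbr_finset_card [DecidableEq V] [DecidableRel G.Adj]
    (hcub : ∀ v : V, (G.neighborSet v).ncard = 3) (v : V) :
    (G.neighborFinset v).card = 3 := by
  rw [← hcub v, neighborFinset_def, Set.ncard_eq_toFinset_card']

/-- In a cubic graph, the complement of a 3-percolating set is independent. -/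
lemma aux_compl_indep_of_percolating (hcub : ∀ v : V, (G.neighborSet v).ncard = 3)
    {S : Set V} (hS : IsPercolating G 3 S) : IsIndep G Sᶜ := by
  intro u hu v hv _ hadj
  obtain ⟨n, hn⟩ := hS
  have key : ∀ k : ℕ, u ∉ (percStep G 3)^[k] S ∧ v ∉ (percStep G 3)^[k] S := by
    intro k
    induction k with
    | zero => exact ⟨hu, hv⟩
    | succ k ih =>
      rw [Function.iterate_succ_apply']
      set B := (percStep G 3)^[k] S with hB
      have bound : ∀ w x : V, G.Adj w x → x ∉ B → ¬ 3 ≤ (G.neighborSet w ∩ B).ncard := by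
        intro w x hwx hx h3
        have hsub : G.neighborSet w ∩ B ⊆ G.neighborSet w \ {x} := by
          intro y hy
          exact ⟨hy.1, fun hyx => hx ((Set.mem_singleton_iff.mp hyx) ▸ hy.2)⟩
        have hfin : (G.neighborSet w).Finite := Set.toFinite _
        have hcard : (G.neighborSet w \ {x}).ncard = 2 := by
          rw [Set.ncard_diff_singleton_of_mem (by rwa [mem_neighborSet]), hcub w]
        have := Set.ncard_le_ncard hsub hfin.diff
        omega
      constructor
      · rintro (h | h)
        · exact ih.1 h
        · exact bound u v hadj ih.2 h
      · rintro (h | h)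
        · exact ih.2 h
        · exact bound v u hadj.symm ih.1 h
  exact (key n).1 (hn ▸ Set.mem_univ u)

/-- Conversely, the complement of an independent set percolates in one step (cubic). -/
lemma aux_percolating_of_compl_indep (hcub : ∀ v : V, (G.neighborSet v).ncard = 3)
    {S : Set V} (hS : IsIndep G Sᶜ) : IsPercolating G 3 S := by
  refine ⟨1, ?_⟩
  rw [Function.iterate_one]
  ext x
  simp only [Set.mem_univ, iff_true, percStep, Set.mem_union, Set.mem_setOf_eq]
  by_cases hx : x ∈ S
  · exact Or.inl hx
  · right
    have : G.neighborSet x ∩ S = G.neighborSet x := by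
      ext y
      simp only [Set.mem_inter_iff, mem_neighborSet, and_iff_left_iff_imp]
      intro hy
      by_contra hyS
      exact hS hx hyS (G.ne_of_adj hy) hy
    rw [this, hcub x]

lemma aux_percNumber_le (A : Set V) (hA : IsPercolating G 3 A) : percNumber G 3 ≤ A.ncard :=
  Nat.sInf_le ⟨A, rfl, hA⟩

lemma aux_percNumber_witness :
    ∃ S : Set V, S.ncard = percNumber G 3 ∧ IsPercolating G 3 S := by
  have hne : {k | ∃ S : Set V, S.ncard = k ∧ IsPercolating G 3 S}.Nonempty :=
    ⟨(Set.univ : Set V).ncard, ⟨Set.univ, rfl, ⟨0, rfl⟩⟩⟩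
  exact Nat.sInf_mem hne

end AuxPerc

section AuxCounting
variable [Fintype V] [DecidableEq V] (G : SimpleGraph V) [DecidableRel G.Adj]

/-- An outside vertex has at most 2 neighbors in an independent set (claw-free). -/
lemma aux_nbrs_in_indep_le_two (hcf : ClawFree G)
    (hcub : ∀ v : V, (G.neighborSet v).ncard = 3)
    {W : Finset V} (hW : IsIndep G ↑W) {v : V} (hv : v ∉ W) :
    (G.neighborFinset v ∩ W).card ≤ 2 := by
  by_contra h
  push_neg at h
  have hle : (G.neighborFinset v ∩ W).card ≤ 3 := by
    calc (G.neighborFinset v ∩ W).card ≤ (G.neighborFinset v).card :=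
          Finset.card_le_card (Finset.inter_subset_left)
      _ = 3 := aux_nbr_finset_card G hcub v
  have h3 : (G.neighborFinset v ∩ W).card = 3 := le_antisymm hle h
  obtain ⟨a, b, c, hab, hac, hbc, habc⟩ := Finset.card_eq_three.mp h3
  have ha : a ∈ G.neighborFinset v ∩ W := by rw [habc]; simp
  have hb : b ∈ G.neighborFinset v ∩ W := by rw [habc]; simp
  have hc : c ∈ G.neighborFinset v ∩ W := by rw [habc]; simp
  simp only [Finset.mem_inter, mem_neighborFinset] at ha hb hc
  exact hcf ⟨v, a, b, c, hab, hac, hbc, ha.1, hb.1, hc.1,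
    hW (by exact_mod_cast ha.2) (by exact_mod_cast hb.2) hab,
    hW (by exact_mod_cast ha.2) (by exact_mod_cast hc.2) hac,
    hW (by exact_mod_cast hb.2) (by exact_mod_cast hc.2) hbc⟩

/-- Counting: an independent set in a claw-free cubic graph has size ≤ 2n/5. -/
lemma aux_indep_card_bound (hcf : ClawFree G) (hcub : ∀ v : V, (G.neighborSet v).ncard = 3)
    {W : Finset V} (hW : IsIndep G ↑W) :
    5 * W.card ≤ 2 * Fintype.card V := by
  classical
  have hWnbr : ∀ w ∈ W, G.neighborFinset w ⊆ Wᶜ := by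
    intro w hw u hu
    rw [mem_neighborFinset] at hu
    simp only [Finset.mem_compl]
    intro huW
    exact hW (by exact_mod_cast hw) (by exact_mod_cast huW) (G.ne_of_adj hu) hu
  have hdouble : ∑ w ∈ W, (G.neighborFinset w).card
      = ∑ v ∈ Wᶜ, (G.neighborFinset v ∩ W).card := by
    have h1 : ∀ w ∈ W, (G.neighborFinset w).card
        = ∑ v ∈ Wᶜ, (if G.Adj w v then 1 else 0) := by
      intro w hw
      rw [← Finset.sum_filter]
      simp only [Finset.sum_const, smul_eq_mul, mul_one]
      congr 1
      ext v
      simp only [Finset.mem_filter, mem_neighborFinset, Finset.mem_compl]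
      constructor
      · intro h; exact ⟨by have := hWnbr w hw (by rwa [mem_neighborFinset]); simpa using this, h⟩
      · intro h; exact h.2
    have h2 : ∀ v ∈ Wᶜ, (G.neighborFinset v ∩ W).card
        = ∑ w ∈ W, (if G.Adj w v then 1 else 0) := by
      intro v _
      rw [← Finset.sum_filter]
      simp only [Finset.sum_const, smul_eq_mul, mul_one]
      congr 1
      ext w
      simp only [Finset.mem_filter, Finset.mem_inter, mem_neighborFinset]
      constructor
      · intro h; exact ⟨h.2, h.1.symm⟩
      · intro h; exact ⟨h.2.symm, h.1⟩
    rw [Finset.sum_congr rfl h1, Finset.sum_congr rfl h2, Finset.sum_comm]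
  have hL : ∑ w ∈ W, (G.neighborFinset w).card = 3 * W.card := by
    rw [Finset.sum_congr rfl (fun w _ => aux_nbr_finset_card G hcub w)]
    simp [mul_comm]
  have hR : ∑ v ∈ Wᶜ, (G.neighborFinset v ∩ W).card ≤ 2 * Wᶜ.card := by
    calc ∑ v ∈ Wᶜ, (G.neighborFinset v ∩ W).card ≤ ∑ _v ∈ Wᶜ, 2 := by
          apply Finset.sum_le_sum
          intro v hv
          exact aux_nbrs_in_indep_le_two G hcf hcub hW (by simpa using hv)
      _ = 2 * Wᶜ.card := by simp [mul_comm]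
  have hc : Wᶜ.card = Fintype.card V - W.card := by
    rw [Finset.card_compl]
  have hWle : W.card ≤ Fintype.card V := W.card_le_univ
  have : 3 * W.card ≤ 2 * (Fintype.card V - W.card) := by
    rw [← hL, ← hc]; exact hdouble ▸ hR
  omega

end AuxCounting

section AuxThmA
variable [Fintype V] [DecidableEq V] (G : SimpleGraph V) [DecidableRel G.Adj]

/-- Main structural lemma: in a claw-free cubic graph with no K4, every finset A
contains an independent set of size ≥ |A|/3. -/
lemma aux_exists_indep_third (hcf : ClawFree G) (hcub : ∀ v : V, (G.neighborSet v).ncard = 3)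
    (hK4 : ¬ ∃ a b c d : V, a ≠ b ∧ a ≠ c ∧ a ≠ d ∧ b ≠ c ∧ b ≠ d ∧ c ≠ d ∧
      G.Adj a b ∧ G.Adj a c ∧ G.Adj a d ∧ G.Adj b c ∧ G.Adj b d ∧ G.Adj c d)
    (A : Finset V) :
    ∃ I : Finset V, I ⊆ A ∧ IsIndep G ↑I ∧ A.card ≤ 3 * I.card := by
  induction A using Finset.strongInduction with
  | _ A ih =>
  by_cases hA0 : A = ∅
  · exact ⟨∅, by simp [hA0], by simp [IsIndep], by simp [hA0]⟩
  by_cases hlow : ∃ v ∈ A, (G.neighborFinset v ∩ A).card ≤ 2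
  · -- low degree vertex: remove its closed neighborhood (≤ 3 vertices of A)
    obtain ⟨v, hvA, hv2⟩ := hlow
    set X : Finset V := insert v (G.neighborFinset v) with hX
    set A' := A \ X with hA'
    have hvX : v ∈ X := Finset.mem_insert_self _ _
    have hA'ss : A' ⊂ A := by
      rw [Finset.ssubset_iff_of_subset Finset.sdiff_subset]
      exact ⟨v, hvA, by simp [hA', hvX]⟩
    obtain ⟨I', hI'A, hI'ind, hI'card⟩ := ih A' hA'ss
    have hvI' : v ∉ I' := fun h => ((Finset.mem_sdiff.mp (hI'A h)).2) hvX
    refine ⟨insert v I', ?_, ?_, ?_⟩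
    · intro u hu
      rcases Finset.mem_insert.mp hu with h | h
      · exact h ▸ hvA
      · exact (Finset.mem_sdiff.mp (hI'A h)).1
    · -- independence
      intro a ha b hb hab hadj
      simp only [Finset.coe_insert, Set.mem_insert_iff, Finset.mem_coe] at ha hb
      have hnadj : ∀ u ∈ I', ¬ G.Adj v u := by
        intro u hu hadj'
        have : u ∈ X := Finset.mem_insert_of_mem (by rwa [mem_neighborFinset])
        exact (Finset.mem_sdiff.mp (hI'A hu)).2 this
      rcases ha with rfl | ha
      · rcases hb with rfl | hb
        · exact hab rfl
        · exact hnadj b hb hadj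
      · rcases hb with rfl | hb
        · exact hnadj a ha hadj.symm
        · exact hI'ind (by exact_mod_cast ha) (by exact_mod_cast hb) hab hadj
    · -- cardinality
      have h1 : A.card ≤ A'.card + 3 := by
        have hinter : (A ∩ X).card ≤ 3 := by
          have hsub2 : A ∩ X ⊆ insert v (G.neighborFinset v ∩ A) := by
            intro u hu
            obtain ⟨huA, huX⟩ := Finset.mem_inter.mp hu
            rcases Finset.mem_insert.mp huX with h | h
            · exact h ▸ Finset.mem_insert_self _ _
            · exact Finset.mem_insert_of_mem (Finset.mem_inter.mpr ⟨h, huA⟩)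
          calc (A ∩ X).card ≤ (insert v (G.neighborFinset v ∩ A)).card :=
                Finset.card_le_card hsub2
            _ ≤ (G.neighborFinset v ∩ A).card + 1 := Finset.card_insert_le _ _
            _ ≤ 3 := by omega
        have hsplit := Finset.card_sdiff_add_card_inter A X
        have hAA' : A'.card = (A \ X).card := rfl
        omega
      have h2 : (insert v I').card = I'.card + 1 := Finset.card_insert_of_notMem hvI'
      omega
  · -- every vertex of A has all 3 neighbors in A
    push_neg at hlow
    have hclosed : ∀ v ∈ A, G.neighborFinset v ⊆ A := by
      intro v hv
      have h3 : (G.neighborFinset v ∩ A).card = 3 := by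
        have := Finset.card_le_card (Finset.inter_subset_left :
          G.neighborFinset v ∩ A ⊆ G.neighborFinset v)
        have hn := aux_nbr_finset_card G hcub v
        have := hlow v hv
        omega
      have : G.neighborFinset v ∩ A = G.neighborFinset v :=
        Finset.eq_of_subset_of_card_le Finset.inter_subset_left
          (by rw [h3, aux_nbr_finset_card G hcub v])
      rw [← this]
      exact Finset.inter_subset_right
    by_cases hdia : ∃ a ∈ A, ∃ b ∈ A, a ≠ b ∧ ¬ G.Adj a b ∧
        2 ≤ (G.neighborFinset a ∩ G.neighborFinset b).card
    · -- diamond-ish case : take both a and b, remove N[a] ∪ N[b] (≤ 6 vertices)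
      obtain ⟨a, haA, b, hbA, hab, hnadj, hcom⟩ := hdia
      set X : Finset V := insert a (insert b (G.neighborFinset a ∪ G.neighborFinset b))
        with hX
      have hXcard : X.card ≤ 6 := by
        have hu : (G.neighborFinset a ∪ G.neighborFinset b).card ≤ 4 := by
          have := Finset.card_union_add_card_inter (G.neighborFinset a) (G.neighborFinset b)
          have h1 := aux_nbr_finset_card G hcub a
          have h2 := aux_nbr_finset_card G hcub b
          omega
        calc X.card ≤ (insert b (G.neighborFinset a ∪ G.neighborFinset b)).card + 1 :=
              Finset.card_insert_le _ _
          _ ≤ (G.neighborFinset a ∪ G.neighborFinset b).card + 1 + 1 := by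
              have := Finset.card_insert_le b (G.neighborFinset a ∪ G.neighborFinset b)
              omega
          _ ≤ 6 := by omega
      set A' := A \ X with hA'
      have haX : a ∈ X := Finset.mem_insert_self _ _
      have hbX : b ∈ X := Finset.mem_insert_of_mem (Finset.mem_insert_self _ _)
      have hA'ss : A' ⊂ A := by
        rw [Finset.ssubset_iff_of_subset Finset.sdiff_subset]
        exact ⟨a, haA, by simp [hA', haX]⟩
      obtain ⟨I', hI'A, hI'ind, hI'card⟩ := ih A' hA'ss
      have hmemX : ∀ u ∈ I', u ∉ X := fun u hu => (Finset.mem_sdiff.mp (hI'A hu)).2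
      have haI' : a ∉ I' := fun h => hmemX a h haX
      have hbI' : b ∉ I' := fun h => hmemX b h hbX
      have hnbrI' : ∀ u ∈ I', ¬ G.Adj a u ∧ ¬ G.Adj b u := by
        intro u hu
        constructor
        · intro had
          exact hmemX u hu (Finset.mem_insert_of_mem (Finset.mem_insert_of_mem
            (Finset.mem_union_left _ (by rwa [mem_neighborFinset]))))
        · intro had
          exact hmemX u hu (Finset.mem_insert_of_mem (Finset.mem_insert_of_mem
            (Finset.mem_union_right _ (by rwa [mem_neighborFinset]))))
      refine ⟨insert a (insert b I'), ?_, ?_, ?_⟩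
      · intro u hu
        rcases Finset.mem_insert.mp hu with rfl | hu
        · exact haA
        rcases Finset.mem_insert.mp hu with rfl | hu
        · exact hbA
        · exact (Finset.mem_sdiff.mp (hI'A hu)).1
      · intro p hp q hq hpq hadj
        simp only [Finset.coe_insert, Set.mem_insert_iff, Finset.mem_coe] at hp hq
        rcases hp with rfl | rfl | hp
        · rcases hq with rfl | rfl | hq
          · exact hpq rfl
          · exact hnadj hadj
          · exact (hnbrI' q hq).1 hadj
        · rcases hq with rfl | rfl | hq
          · exact hnadj hadj.symm
          · exact hpq rfl
          · exact (hnbrI' q hq).2 hadj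
        · rcases hq with rfl | rfl | hq
          · exact (hnbrI' p hp).1 hadj.symm
          · exact (hnbrI' p hp).2 hadj.symm
          · exact hI'ind (by exact_mod_cast hp) (by exact_mod_cast hq) hpq hadj
      · have hsplit := Finset.card_sdiff_add_card_inter A X
        have hinter : (A ∩ X).card ≤ 6 :=
          le_trans (Finset.card_le_card Finset.inter_subset_right) hXcard
        have hAA' : A'.card = (A \ X).card := rfl
        have hci : (insert a (insert b I')).card = I'.card + 2 := by
          rw [Finset.card_insert_of_notMem, Finset.card_insert_of_notMem hbI']
          simp only [Finset.mem_insert]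
          push_neg
          exact ⟨hab, haI'⟩
        omega
    · -- triangle case
      push_neg at hdia
      -- unique edge in each neighborhood
      have huniq : ∀ v ∈ A, ∀ p q r : V, p ∈ G.neighborFinset v → q ∈ G.neighborFinset v →
          r ∈ G.neighborFinset v → q ≠ r → G.Adj p q → G.Adj p r → False := by
        intro v hv p q r hp hq hr hqr hpq hpr
        rw [mem_neighborFinset] at hp hq hr
        by_cases hadj : G.Adj q r
        · exact hK4 ⟨v, p, q, r, G.ne_of_adj hp, G.ne_of_adj hq, G.ne_of_adj hr,
            G.ne_of_adj hpq, G.ne_of_adj hpr, hqr, hp, hq, hr, hpq, hpr, hadj⟩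
        · have hqA : q ∈ A := hclosed v hv (by rwa [mem_neighborFinset])
          have hrA : r ∈ A := hclosed v hv (by rwa [mem_neighborFinset])
          have hlt := hdia q hqA r hrA hqr hadj
          have hsub : ({v, p} : Finset V) ⊆ G.neighborFinset q ∩ G.neighborFinset r := by
            intro w hw
            rcases Finset.mem_insert.mp hw with rfl | hw
            · exact Finset.mem_inter.mpr ⟨by rwa [mem_neighborFinset, adj_comm],
                by rwa [mem_neighborFinset, adj_comm]⟩
            · rw [Finset.mem_singleton.mp hw]
              exact Finset.mem_inter.mpr ⟨by rwa [mem_neighborFinset, adj_comm],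
                by rwa [mem_neighborFinset, adj_comm]⟩
          have hvp : v ≠ p := G.ne_of_adj hp
          have h2 : ({v, p} : Finset V).card = 2 := Finset.card_pair hvp
          have := Finset.card_le_card hsub
          omega
      -- structure of each neighborhood
      have hNv : ∀ v ∈ A, ∃ x y z : V, G.neighborFinset v = {x, y, z} ∧ x ≠ y ∧ x ≠ z ∧
          y ≠ z ∧ G.Adj x y ∧ ¬ G.Adj x z ∧ ¬ G.Adj y z := by
        intro v hv
        obtain ⟨x, y, z, hxy, hxz, hyz, hset⟩ :=
          Finset.card_eq_three.mp (aux_nbr_finset_card G hcub v)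
        have hxN : x ∈ G.neighborFinset v := by rw [hset]; simp
        have hyN : y ∈ G.neighborFinset v := by rw [hset]; simp
        have hzN : z ∈ G.neighborFinset v := by rw [hset]; simp
        have hedge : G.Adj x y ∨ G.Adj x z ∨ G.Adj y z := by
          by_contra h
          push_neg at h
          rw [mem_neighborFinset] at hxN hyN hzN
          exact hcf ⟨v, x, y, z, hxy, hxz, hyz, hxN, hyN, hzN, h.1, h.2.1, h.2.2⟩
        rcases hedge with h | h | h
        · refine ⟨x, y, z, hset, hxy, hxz, hyz, h, ?_, ?_⟩
          · exact fun had => huniq v hv x y z hxN hyN hzN hyz h had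
          · exact fun had => huniq v hv y x z hyN hxN hzN hxz h.symm had
        · refine ⟨x, z, y, ?_, hxz, hxy, hyz.symm, h, ?_, ?_⟩
          · rw [hset]; ext w; simp; tauto
          · exact fun had => huniq v hv x z y hxN hzN hyN hyz.symm h had
          · exact fun had => huniq v hv z x y hzN hxN hyN hxy h.symm had
        · refine ⟨y, z, x, ?_, hyz, hxy.symm, hxz.symm, h, ?_, ?_⟩
          · rw [hset]; ext w; simp; tauto
          · exact fun had => huniq v hv y z x hyN hzN hxN hxz.symm h had
          · exact fun had => huniq v hv z y x hzN hyN hxN hxy.symm h.symm had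
      have hchoice : ∀ v : V, ∃ t : V × V × V, v ∈ A →
          (G.neighborFinset v = {t.1, t.2.1, t.2.2} ∧ t.1 ≠ t.2.1 ∧ t.1 ≠ t.2.2 ∧
            t.2.1 ≠ t.2.2 ∧ G.Adj t.1 t.2.1 ∧ ¬ G.Adj t.1 t.2.2 ∧ ¬ G.Adj t.2.1 t.2.2) := by
        intro v
        by_cases hv : v ∈ A
        · obtain ⟨x, y, z, h1, h2, h3, h4, h5, h6, h7⟩ := hNv v hv
          exact ⟨(x, y, z), fun _ => ⟨h1, h2, h3, h4, h5, h6, h7⟩⟩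
        · exact ⟨(v, v, v), fun h => absurd h hv⟩
      choose tf htf using hchoice
      set xf : V → V := fun v => (tf v).1 with hxf
      set yf : V → V := fun v => (tf v).2.1 with hyf
      set zf : V → V := fun v => (tf v).2.2 with hzf
      have hset : ∀ v ∈ A, G.neighborFinset v = {xf v, yf v, zf v} := fun v hv => (htf v hv).1
      have hdxy : ∀ v ∈ A, xf v ≠ yf v := fun v hv => (htf v hv).2.1
      have hdxz : ∀ v ∈ A, xf v ≠ zf v := fun v hv => (htf v hv).2.2.1
      have hdyz : ∀ v ∈ A, yf v ≠ zf v := fun v hv => (htf v hv).2.2.2.1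
      have haxy : ∀ v ∈ A, G.Adj (xf v) (yf v) := fun v hv => (htf v hv).2.2.2.2.1
      have hnxz : ∀ v ∈ A, ¬ G.Adj (xf v) (zf v) := fun v hv => (htf v hv).2.2.2.2.2.1
      have hnyz : ∀ v ∈ A, ¬ G.Adj (yf v) (zf v) := fun v hv => (htf v hv).2.2.2.2.2.2
      have hxN : ∀ v ∈ A, xf v ∈ G.neighborFinset v := by intro v hv; rw [hset v hv]; simp
      have hyN : ∀ v ∈ A, yf v ∈ G.neighborFinset v := by intro v hv; rw [hset v hv]; simp
      have hzN : ∀ v ∈ A, zf v ∈ G.neighborFinset v := by intro v hv; rw [hset v hv]; simp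
      have havx : ∀ v ∈ A, G.Adj v (xf v) := by
        intro v hv; rw [← mem_neighborFinset]; exact hxN v hv
      have havy : ∀ v ∈ A, G.Adj v (yf v) := by
        intro v hv; rw [← mem_neighborFinset]; exact hyN v hv
      have havz : ∀ v ∈ A, G.Adj v (zf v) := by
        intro v hv; rw [← mem_neighborFinset]; exact hzN v hv
      -- the unique adjacent pair in a neighborhood is {xf v, yf v}
      have hpair : ∀ v ∈ A, ∀ p q : V, p ∈ G.neighborFinset v → q ∈ G.neighborFinset v →
          p ≠ q → G.Adj p q → ({p, q} : Finset V) = {xf v, yf v} := by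
        intro v hv p q hp hq hpq hadj
        have hpm : p = xf v ∨ p = yf v ∨ p = zf v := by
          have := hp; rw [hset v hv] at this; simpa using this
        have hqm : q = xf v ∨ q = yf v ∨ q = zf v := by
          have := hq; rw [hset v hv] at this; simpa using this
        rcases hpm with rfl | rfl | rfl
        · rcases hqm with h | rfl | rfl
          · exact absurd h.symm hpq
          · rfl
          · exact absurd hadj (hnxz v hv)
        · rcases hqm with rfl | h | rfl
          · exact Finset.pair_comm _ _
          · exact absurd h.symm hpq
          · exact absurd hadj (hnyz v hv)
        · rcases hqm with rfl | rfl | h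
          · exact absurd hadj.symm (hnxz v hv)
          · exact absurd hadj.symm (hnyz v hv)
          · exact absurd h.symm hpq
      set trif : V → Finset V := fun v => {v, xf v, yf v} with htrif
      have htrimem : ∀ u v : V, u ∈ trif v ↔ u = v ∨ u = xf v ∨ u = yf v := by
        intro u v
        show u ∈ ({v, xf v, yf v} : Finset V) ↔ _
        simp [Finset.mem_insert]
      have hvtri : ∀ v : V, v ∈ trif v := fun v => (htrimem v v).mpr (Or.inl rfl)
      have htriA : ∀ v ∈ A, trif v ⊆ A := by
        intro v hv u hu
        rcases (htrimem u v).mp hu with rfl | rfl | rfl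
        · exact hv
        · exact hclosed v hv (hxN v hv)
        · exact hclosed v hv (hyN v hv)
      have htricard : ∀ v ∈ A, (trif v).card = 3 := by
        intro v hv
        show ({v, xf v, yf v} : Finset V).card = 3
        rw [Finset.card_insert_of_notMem, Finset.card_insert_of_notMem, Finset.card_singleton]
        · simpa using (hdxy v hv)
        · simp only [Finset.mem_insert, Finset.mem_singleton]
          push_neg
          exact ⟨G.ne_of_adj (havx v hv), G.ne_of_adj (havy v hv)⟩
      -- F2 : triangles of members coincide
      have hF2 : ∀ v ∈ A, ∀ u ∈ trif v, trif u = trif v := by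
        intro v hv u hu
        rcases (htrimem u v).mp hu with rfl | rfl | rfl
        · rfl
        · -- u = xf v
          have huA : xf v ∈ A := hclosed v hv (hxN v hv)
          have h1 : v ∈ G.neighborFinset (xf v) := by
            rw [mem_neighborFinset]; exact (havx v hv).symm
          have h2 : yf v ∈ G.neighborFinset (xf v) := by
            rw [mem_neighborFinset]; exact haxy v hv
          have hne : v ≠ yf v := G.ne_of_adj (havy v hv)
          have hp := hpair (xf v) huA v (yf v) h1 h2 hne (by
            rw [← mem_neighborFinset]; exact hyN v hv)
          -- trif (xf v) = insert (xf v) {xf (xf v), yf (xf v)} = insert (xf v) {v, yf v}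
          have h0 : trif (xf v) = insert (xf v) ({xf (xf v), yf (xf v)} : Finset V) := rfl
          rw [h0, ← hp]
          ext w
          rw [htrimem w v]
          simp only [Finset.mem_insert, Finset.mem_singleton]
          tauto
        · -- u = yf v
          have huA : yf v ∈ A := hclosed v hv (hyN v hv)
          have h1 : v ∈ G.neighborFinset (yf v) := by
            rw [mem_neighborFinset]; exact (havy v hv).symm
          have h2 : xf v ∈ G.neighborFinset (yf v) := by
            rw [mem_neighborFinset]; exact (haxy v hv).symm
          have hne : v ≠ xf v := G.ne_of_adj (havx v hv)
          have hp := hpair (yf v) huA v (xf v) h1 h2 hne (havx v hv)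
          have h0 : trif (yf v) = insert (yf v) ({xf (yf v), yf (yf v)} : Finset V) := rfl
          rw [h0, ← hp]
          ext w
          rw [htrimem w v]
          simp only [Finset.mem_insert, Finset.mem_singleton]
          tauto
      -- F3 : zf v is not in the triangle of v
      have hF3 : ∀ v ∈ A, zf v ∉ trif v := by
        intro v hv h
        rcases (htrimem _ v).mp h with h | h | h
        · exact G.ne_of_adj (havz v hv) h.symm
        · exact (hdxz v hv) h.symm
        · exact (hdyz v hv) h.symm
      -- F4 : zf is an involution on A
      have hF4 : ∀ v ∈ A, zf (zf v) = v := by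
        intro v hv
        have huA : zf v ∈ A := hclosed v hv (hzN v hv)
        have hvN : v ∈ G.neighborFinset (zf v) := by
          rw [mem_neighborFinset]; exact (havz v hv).symm
        have hvm : v = xf (zf v) ∨ v = yf (zf v) ∨ v = zf (zf v) := by
          rw [hset (zf v) huA] at hvN; simpa using hvN
        rcases hvm with h | h | h
        · exfalso
          have : v ∈ trif (zf v) := (htrimem v (zf v)).mpr (Or.inr (Or.inl h))
          have htt : trif v = trif (zf v) := hF2 (zf v) huA v this
          have : zf v ∈ trif v := by rw [htt]; exact hvtri (zf v)
          exact hF3 v hv this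
        · exfalso
          have : v ∈ trif (zf v) := (htrimem v (zf v)).mpr (Or.inr (Or.inr h))
          have htt : trif v = trif (zf v) := hF2 (zf v) huA v this
          have : zf v ∈ trif v := by rw [htt]; exact hvtri (zf v)
          exact hF3 v hv this
        · exact h.symm
      -- F6 : distinct triangles are disjoint
      have hF6 : ∀ u ∈ A, ∀ v ∈ A, trif u ≠ trif v → Disjoint (trif u) (trif v) := by
        intro u hu v hv hne
        rw [Finset.disjoint_left]
        intro w hwu hwv
        have hwA : w ∈ A := htriA u hu hwu
        exact hne ((hF2 u hu w hwu).symm.trans (hF2 v hv w hwv))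
      -- A is the disjoint union of its triangles
      have hAcard : A.card = 3 * (A.image trif).card := by
        have hAcover : A = (A.image trif).biUnion id := by
          ext u
          simp only [Finset.mem_biUnion, Finset.mem_image, id]
          constructor
          · intro hu
            exact ⟨trif u, ⟨u, hu, rfl⟩, hvtri u⟩
          · rintro ⟨T, ⟨v, hv, rfl⟩, huT⟩
            exact htriA v hv huT
        have hdisj : ∀ T1 ∈ A.image trif, ∀ T2 ∈ A.image trif, T1 ≠ T2 →
            Disjoint (id T1) (id T2) := by
          rintro T1 hT1 T2 hT2 hne
          obtain ⟨u, hu, rfl⟩ := Finset.mem_image.mp hT1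
          obtain ⟨v, hv, rfl⟩ := Finset.mem_image.mp hT2
          exact hF6 u hu v hv hne
        conv_lhs => rw [hAcover]
        rw [Finset.card_biUnion hdisj]
        rw [Finset.sum_congr rfl (fun T hT => ?_)]
        · rw [Finset.sum_const, smul_eq_mul, mul_comm]
        · obtain ⟨v, hv, rfl⟩ := Finset.mem_image.mp hT
          exact htricard v hv
      -- Hall's theorem setup
      set ι := {T // T ∈ A.image trif} with hι
      set sets : ι → Finset (Finset V) :=
        fun T => T.1.image (fun u => ({u, zf u} : Finset V)) with hsets
      have hT1 : ∀ T : ι, ∃ v ∈ A, trif v = T.1 := fun T => by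
        obtain ⟨v, hv, h⟩ := Finset.mem_image.mp T.2; exact ⟨v, hv, h⟩
      have hmemtri : ∀ (T : ι) (u : V), u ∈ T.1 → u ∈ A ∧ trif u = T.1 := by
        intro T u hu
        obtain ⟨v, hv, hvT⟩ := hT1 T
        rw [← hvT] at hu
        exact ⟨htriA v hv hu, by rw [hF2 v hv u hu, hvT]⟩
      have hall_cond : ∀ s : Finset ι, s.card ≤ (s.biUnion sets).card := by
        intro s
        set U := s.biUnion sets with hU
        have hsub : ∀ T ∈ s, sets T ⊆ U := fun T hT => Finset.subset_biUnion_of_mem sets hT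
        have hcard3 : ∀ T ∈ s, (sets T).card = 3 := by
          intro T hT
          have hinj : Set.InjOn (fun u => ({u, zf u} : Finset V)) ↑(T.1) := by
            intro u hu u' hu' heq
            rw [Finset.mem_coe] at hu hu'
            by_contra hne
            have huA := (hmemtri T u hu).1
            have heq' : ({u, zf u} : Finset V) = {u', zf u'} := heq
            have : u' ∈ ({u, zf u} : Finset V) := by
              rw [heq']; simp
            rcases Finset.mem_insert.mp this with h | h
            · exact hne h.symm
            · rw [Finset.mem_singleton] at h
              subst h
              have hz : zf u ∈ trif u := by
                rw [(hmemtri T u hu).2]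
                exact hu'
              exact hF3 u huA hz
          have h1 : (sets T).card = (T.1).card := Finset.card_image_of_injOn hinj
          obtain ⟨v, hv, hvT⟩ := hT1 T
          rw [h1, ← hvT]
          exact htricard v hv
        have hfib : ∀ e ∈ U, (s.filter (fun T => e ∈ sets T)).card ≤ 2 := by
          intro e heU
          obtain ⟨T₀, hT₀s, heT₀⟩ := Finset.mem_biUnion.mp heU
          obtain ⟨u₀, hu₀, he₀⟩ := Finset.mem_image.mp heT₀
          have hu₀A := (hmemtri T₀ u₀ hu₀).1
          have hz₀A : zf u₀ ∈ A := hclosed u₀ hu₀A (hzN u₀ hu₀A)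
          have ht₁ : trif u₀ ∈ A.image trif := Finset.mem_image.mpr ⟨u₀, hu₀A, rfl⟩
          have ht₂ : trif (zf u₀) ∈ A.image trif := Finset.mem_image.mpr ⟨zf u₀, hz₀A, rfl⟩
          have hsubfil : s.filter (fun T => e ∈ sets T) ⊆
              {(⟨trif u₀, ht₁⟩ : ι), (⟨trif (zf u₀), ht₂⟩ : ι)} := by
            intro T hT
            obtain ⟨hTs, heT⟩ := Finset.mem_filter.mp hT
            obtain ⟨u, hu, heu⟩ := Finset.mem_image.mp heT
            have huA := (hmemtri T u hu).1
            have hTu : T.1 = trif u := ((hmemtri T u hu).2).symm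
            have hue : u ∈ ({u₀, zf u₀} : Finset V) := by
              rw [he₀, ← heu]; simp
            simp only [Finset.mem_insert, Finset.mem_singleton]
            rcases Finset.mem_insert.mp hue with h | h
            · left; apply Subtype.ext; rw [hTu, h]
            · right; apply Subtype.ext; rw [hTu, Finset.mem_singleton.mp h]
          calc (s.filter (fun T => e ∈ sets T)).card
              ≤ ({(⟨trif u₀, ht₁⟩ : ι), (⟨trif (zf u₀), ht₂⟩ : ι)} : Finset ι).card :=
                Finset.card_le_card hsubfil
            _ ≤ 2 := Finset.card_insert_le _ _ |>.trans (by simp)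
        have hdc : ∑ T ∈ s, (sets T).card = ∑ e ∈ U, (s.filter (fun T => e ∈ sets T)).card := by
          have h1 : ∀ T ∈ s, (sets T).card = ∑ e ∈ U, (if e ∈ sets T then 1 else 0) := by
            intro T hT
            rw [← Finset.sum_filter]
            simp only [Finset.sum_const, smul_eq_mul, mul_one]
            congr 1
            ext e
            simp only [Finset.mem_filter]
            exact ⟨fun h => ⟨hsub T hT h, h⟩, fun h => h.2⟩
          have h2 : ∀ e ∈ U, (s.filter (fun T => e ∈ sets T)).card
              = ∑ T ∈ s, (if e ∈ sets T then 1 else 0) := by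
            intro e _
            rw [← Finset.sum_filter]
            simp
          rw [Finset.sum_congr rfl h1, Finset.sum_congr rfl h2, Finset.sum_comm]
        have hL : ∑ T ∈ s, (sets T).card = 3 * s.card := by
          rw [Finset.sum_congr rfl hcard3, Finset.sum_const, smul_eq_mul, mul_comm]
        have hR : ∑ e ∈ U, (s.filter (fun T => e ∈ sets T)).card ≤ 2 * U.card := by
          calc ∑ e ∈ U, (s.filter (fun T => e ∈ sets T)).card ≤ ∑ _e ∈ U, 2 :=
                Finset.sum_le_sum hfib
            _ = 2 * U.card := by rw [Finset.sum_const, smul_eq_mul, mul_comm]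
        have : 3 * s.card ≤ 2 * U.card := by rw [← hL, hdc]; exact hR
        omega
      obtain ⟨f, hfinj, hf⟩ :=
        (Finset.all_card_le_biUnion_card_iff_exists_injective sets).mp hall_cond
      have hselect : ∀ T : ι, ∃ u, u ∈ T.1 ∧ f T = {u, zf u} := by
        intro T
        obtain ⟨u, hu, heq⟩ := Finset.mem_image.mp (hf T)
        exact ⟨u, hu, heq.symm⟩
      choose sel hsel1 hsel2 using hselect
      have hselA : ∀ T : ι, sel T ∈ A := fun T => (hmemtri T (sel T) (hsel1 T)).1
      have hselT : ∀ T : ι, trif (sel T) = T.1 := fun T => (hmemtri T (sel T) (hsel1 T)).2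
      have hselinj : Function.Injective sel := by
        intro T T' h
        apply Subtype.ext
        rw [← hselT T, ← hselT T', h]
      refine ⟨Finset.univ.image sel, ?_, ?_, ?_⟩
      · intro u hu
        obtain ⟨T, _, rfl⟩ := Finset.mem_image.mp hu
        exact hselA T
      · -- independence
        intro p hp q hq hpq hadj
        simp only [Finset.coe_image, Set.mem_image, Finset.mem_coe] at hp hq
        obtain ⟨T, _, rfl⟩ := hp
        obtain ⟨T', _, rfl⟩ := hq
        have hTT' : T ≠ T' := fun h => hpq (by rw [h])
        set p := sel T
        set q := sel T'
        have hpA := hselA T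
        have hqA := hselA T'
        have hqm : q = xf p ∨ q = yf p ∨ q = zf p := by
          have : q ∈ G.neighborFinset p := by rw [mem_neighborFinset]; exact hadj
          rw [hset p hpA] at this; simpa using this
        have hdisjTT : T.1 ≠ T'.1 := fun h => hTT' (Subtype.ext h)
        have hdisj := hF6 p hpA q hqA (by rw [hselT T, hselT T']; exact hdisjTT)
        rcases hqm with h | h | h
        · have : q ∈ trif p := by rw [htrif]; simp [h]
          exact (Finset.disjoint_left.mp hdisj this) (hvtri q)
        · have : q ∈ trif p := by rw [htrif]; simp [h]
          exact (Finset.disjoint_left.mp hdisj this) (hvtri q)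
        · -- q = zf p: then the two chosen edges coincide, contradiction with injectivity
          have hfT : f T = {p, q} := by rw [hsel2 T, ← h]
          have hzq : zf q = p := by rw [h]; exact hF4 p hpA
          have hfT' : f T' = {q, p} := by
            rw [hsel2 T', hzq]
          have : f T = f T' := by rw [hfT, hfT', Finset.pair_comm]
          exact hTT' (hfinj this)
      · -- cardinality
        have hcardI : (Finset.univ.image sel).card = (A.image trif).card := by
          rw [Finset.card_image_of_injective _ hselinj, Finset.card_univ]
          exact Fintype.card_coe _
        rw [hcardI, ← hAcard]

end AuxThmA

section AuxK4
variable [Fintype V] (G : SimpleGraph V)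

lemma aux_no_K4_of_not_iso (hconn : G.Connected)
    (hcub : ∀ v : V, (G.neighborSet v).ncard = 3)
    (hK4 : ¬ Nonempty (G ≃g (⊤ : SimpleGraph (Fin 4)))) :
    ¬ ∃ a b c d : V, a ≠ b ∧ a ≠ c ∧ a ≠ d ∧ b ≠ c ∧ b ≠ d ∧ c ≠ d ∧
      G.Adj a b ∧ G.Adj a c ∧ G.Adj a d ∧ G.Adj b c ∧ G.Adj b d ∧ G.Adj c d := by
  rintro ⟨a, b, c, d, hab, hac, had, hbc, hbd, hcd, Aab, Aac, Aad, Abc, Abd, Acd⟩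
  classical
  set S : Set V := {a, b, c, d} with hS
  have hNset : ∀ (u p q r : V), p ≠ q → p ≠ r → q ≠ r →
      G.Adj u p → G.Adj u q → G.Adj u r → G.neighborSet u = {p, q, r} := by
    intro u p q r h1 h2 h3 a1 a2 a3
    symm
    apply Set.eq_of_subset_of_ncard_le
    · intro w hw
      rcases hw with rfl | rfl | rfl
      · exact a1
      · exact a2
      · exact a3
    · rw [hcub u]
      have : ({p, q, r} : Set V).ncard = 3 := Set.ncard_eq_three.mpr ⟨p, q, r, h1, h2, h3, rfl⟩
      omega
    · exact Set.toFinite _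
  have hNa := hNset a b c d hbc hbd hcd Aab Aac Aad
  have hNb := hNset b a c d hac had hcd Aab.symm Abc Abd
  have hNc := hNset c a b d hab had hbd Aac.symm Abc.symm Acd
  have hNd := hNset d a b c hab hac hbc Aad.symm Abd.symm Acd.symm
  have hclosure : ∀ u ∈ S, ∀ w : V, G.Adj u w → w ∈ S := by
    intro u hu w hw
    rcases hu with rfl | rfl | rfl | rfl
    · have : w ∈ G.neighborSet u := hw
      rw [hNa] at this
      rcases this with rfl | rfl | rfl <;> simp [hS]
    · have : w ∈ G.neighborSet u := hw
      rw [hNb] at this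
      rcases this with rfl | rfl | rfl <;> simp [hS]
    · have : w ∈ G.neighborSet u := hw
      rw [hNc] at this
      rcases this with rfl | rfl | rfl <;> simp [hS]
    · have : w ∈ G.neighborSet u := hw
      rw [hNd] at this
      rcases this with rfl | rfl | rfl <;> simp [hS]
  have hall : ∀ v : V, v ∈ S := by
    have step : ∀ (x y : V) (p : G.Walk x y), x ∈ S → y ∈ S := by
      intro x y p
      induction p with
      | nil => exact id
      | cons h p ih => intro hx; exact ih (hclosure _ hx _ h)
    intro v
    obtain ⟨p⟩ := hconn.preconnected a v
    exact step a v p (by simp [hS])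
  have hadj_iff : ∀ u v : V, G.Adj u v ↔ u ≠ v := by
    intro u v
    constructor
    · exact G.ne_of_adj
    · intro huv
      have hu := hall u
      have hv := hall v
      rcases hu with rfl | rfl | rfl | rfl <;> rcases hv with rfl | rfl | rfl | rfl <;>
        first
          | exact absurd rfl huv
          | assumption
          | exact Aab.symm
          | exact Aac.symm
          | exact Aad.symm
          | exact Abc.symm
          | exact Abd.symm
          | exact Acd.symm
  have e : Fin 4 → V := ![a, b, c, d]
  have hbij : Function.Bijective ![a, b, c, d] := by
    constructor
    · intro i j hij
      fin_cases i <;> fin_cases j <;>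
        simp_all [Matrix.cons_val_zero, Matrix.cons_val_one, Matrix.head_cons] <;>
        first
          | rfl
          | exact absurd hij hab | exact absurd hij hac | exact absurd hij had
          | exact absurd hij hbc | exact absurd hij hbd | exact absurd hij hcd
          | exact absurd hij.symm hab | exact absurd hij.symm hac
          | exact absurd hij.symm had | exact absurd hij.symm hbc
          | exact absurd hij.symm hbd | exact absurd hij.symm hcd
    · intro v
      rcases hall v with rfl | rfl | rfl | rfl
      · exact ⟨0, rfl⟩
      · exact ⟨1, rfl⟩
      · exact ⟨2, rfl⟩
      · exact ⟨3, rfl⟩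
  set eqv : V ≃ Fin 4 := (Equiv.ofBijective _ hbij).symm with heqv
  apply hK4
  refine ⟨⟨eqv, ?_⟩⟩
  intro u v
  simp only [top_adj]
  rw [hadj_iff u v]
  constructor
  · intro h hne; exact h (congrArg eqv hne)
  · intro h hne; exact h (eqv.injective hne)

end AuxK4


theorem stmt5 {V : Type*} [Fintype V] (G : SimpleGraph V)
    (hconn : G.Connected) (hcf : ClawFree G)
    (hcub : ∀ v : V, (G.neighborSet v).ncard = 3)
    (hK4 : ¬ Nonempty (G ≃g (⊤ : SimpleGraph (Fin 4)))) :
    3 * (Fintype.card V : ℝ) / 5 ≤ (percNumber G 3 : ℝ) ∧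
    (percNumber G 3 : ℝ) ≤ 2 * (Fintype.card V : ℝ) / 3 := by
  classical
  letI : DecidableRel G.Adj := Classical.decRel _
  have hK4' := aux_no_K4_of_not_iso G hconn hcub hK4
  constructor
  · -- lower bound
    obtain ⟨S₀, hS₀card, hS₀perc⟩ := aux_percNumber_witness G
    have hindep : IsIndep G S₀ᶜ := aux_compl_indep_of_percolating G hcub hS₀perc
    have hW : IsIndep G ↑(S₀ᶜ.toFinset) := by rw [Set.coe_toFinset]; exact hindep
    have h5 : 5 * S₀ᶜ.toFinset.card ≤ 2 * Fintype.card V :=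
      aux_indep_card_bound G hcf hcub hW
    have hsum : S₀.ncard + S₀ᶜ.ncard = Fintype.card V := by
      rw [Set.ncard_add_ncard_compl S₀, Nat.card_eq_fintype_card]
    have hWc : S₀ᶜ.ncard = S₀ᶜ.toFinset.card := Set.ncard_eq_toFinset_card' _
    have hkey : 3 * Fintype.card V ≤ 5 * percNumber G 3 := by omega
    have hkeyR : (3 * Fintype.card V : ℝ) ≤ 5 * percNumber G 3 := by exact_mod_cast hkey
    push_cast at hkeyR
    linarith
  · -- upper bound
    obtain ⟨I, hIA, hIind, hIcard⟩ := aux_exists_indep_third G hcf hcub hK4' Finset.univ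
    rw [Finset.card_univ] at hIcard
    have hperc : IsPercolating G 3 (↑I : Set V)ᶜ :=
      aux_percolating_of_compl_indep G hcub (by rw [compl_compl]; exact hIind)
    have hle : percNumber G 3 ≤ ((↑I : Set V)ᶜ).ncard := aux_percNumber_le G _ hperc
    have hsum : (↑I : Set V).ncard + ((↑I : Set V)ᶜ).ncard = Fintype.card V := by
      rw [Set.ncard_add_ncard_compl _, Nat.card_eq_fintype_card]
    rw [Set.ncard_coe_finset] at hsum
    have hkey : 3 * percNumber G 3 ≤ 2 * Fintype.card V := by omega
    have hkeyR : (3 * percNumber G 3 : ℝ) ≤ 2 * Fintype.card V := by exact_mod_cast hkey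
    push_cast at hkeyR
    linarith
end

section
/- If G ≠ K_4 is a connected, claw-free, cubic graph, then the vertex set of G can be uniquely partitioned into sets each of which induces a triangle (K_3) or a diamond (K_4 minus an edge) in G. -/
open SimpleGraph Set

variable {V : Type*}

section AuxTD
set_option linter.unusedSectionVars false
set_option linter.unusedVariables false
set_option linter.unreachableTactic false
set_option linter.unusedTactic false
variable [Fintype V] {G : SimpleGraph V}


lemma nbr_eq (hcub : ∀ v : V, (G.neighborSet v).ncard = 3)
    {v a b c : V} (hab : a ≠ b) (hac : a ≠ c) (hbc : b ≠ c)
    (ha : G.Adj v a) (hb : G.Adj v b) (hc : G.Adj v c) :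
    G.neighborSet v = {a, b, c} := by
  have hsub : ({a, b, c} : Set V) ⊆ G.neighborSet v := by
    intro x hx
    simp only [Set.mem_insert_iff, Set.mem_singleton_iff] at hx
    rcases hx with rfl | rfl | rfl <;> simpa using ‹_›
  have h3 : ({a,b,c} : Set V).ncard = 3 :=
    Set.ncard_eq_three.mpr ⟨a,b,c,hab,hac,hbc,rfl⟩
  exact (Set.eq_of_subset_of_ncard_le hsub (by rw [hcub, h3]) (Set.toFinite _)).symm

lemma adj_mem_of {v a b c x : V} (h : G.neighborSet v = {a,b,c}) (hx : G.Adj v x) :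
    x = a ∨ x = b ∨ x = c := by
  have hm : x ∈ G.neighborSet v := hx
  rw [h] at hm
  simpa using hm

lemma noK4 (hconn : G.Connected)
    (hK4 : ¬ Nonempty (G ≃g (⊤ : SimpleGraph (Fin 4))))
    (hcub : ∀ v : V, (G.neighborSet v).ncard = 3)
    {v a b c : V} (hab : a ≠ b) (hac : a ≠ c) (hbc : b ≠ c)
    (ha : G.Adj v a) (hb : G.Adj v b) (hc : G.Adj v c)
    (h1 : G.Adj a b) (h2 : G.Adj a c) (h3 : G.Adj b c) : False := by
  have hva : v ≠ a := ha.ne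
  have hvb : v ≠ b := hb.ne
  have hvc : v ≠ c := hc.ne
  set S : Set V := {v, a, b, c} with hS
  have hNv : G.neighborSet v = {a,b,c} := nbr_eq hcub hab hac hbc ha hb hc
  have hNa : G.neighborSet a = {v,b,c} := nbr_eq hcub hvb hvc hbc ha.symm h1 h2
  have hNb : G.neighborSet b = {v,a,c} := nbr_eq hcub hva hvc hac hb.symm h1.symm h3
  have hNc : G.neighborSet c = {v,a,b} := nbr_eq hcub hva hvb hab hc.symm h2.symm h3.symm
  have hclosed : ∀ x ∈ S, ∀ y, G.Adj x y → y ∈ S := by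
    intro x hx y hxy
    simp only [hS, Set.mem_insert_iff, Set.mem_singleton_iff] at hx ⊢
    have hy : y ∈ G.neighborSet x := hxy
    rcases hx with rfl|rfl|rfl|rfl
    · rw [hNv] at hy; simp at hy; tauto
    · rw [hNa] at hy; simp at hy; tauto
    · rw [hNb] at hy; simp at hy; tauto
    · rw [hNc] at hy; simp at hy; tauto
  have hall : ∀ x : V, x ∈ S := by
    intro x
    have hr : G.Reachable v x := hconn.preconnected v x
    obtain ⟨p⟩ := hr
    have key : ∀ (u w : V) (_ : G.Walk u w), u ∈ S → w ∈ S := by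
      intro u w p
      induction p with
      | nil => exact id
      | cons h q ih => intro hu; exact ih (hclosed _ hu _ h)
    exact key v x p (by simp [hS])
  -- build iso
  let f : Fin 4 → V := ![v, a, b, c]
  have hinj : Function.Injective f := by
    intro i j hij
    fin_cases i <;> fin_cases j <;> simp_all [f] <;>
      first | rfl | exact absurd hij (by tauto) |
        exact absurd hij.symm (by tauto)
  have hsurj : Function.Surjective f := by
    intro x
    have := hall x
    simp only [hS, Set.mem_insert_iff, Set.mem_singleton_iff] at this
    rcases this with rfl|rfl|rfl|rfl
    exacts [⟨0, rfl⟩, ⟨1, rfl⟩, ⟨2, rfl⟩, ⟨3, rfl⟩]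
  let e := Equiv.ofBijective f ⟨hinj, hsurj⟩
  have hiso : (⊤ : SimpleGraph (Fin 4)) ≃g G := by
    refine ⟨e, ?_⟩
    intro i j
    simp only [top_adj]
    constructor
    · intro hadj
      intro hij; subst hij; exact G.loopless.irrefl _ hadj
    · intro hij
      have : f i = e i := rfl
      fin_cases i <;> fin_cases j <;>
        simp [e, f, Equiv.ofBijective_apply] at hij ⊢ <;>
        first
        | exact ha
        | exact hb
        | exact hc
        | exact h1
        | exact h2
        | exact h3
        | exact ha.symm
        | exact hb.symm
        | exact hc.symm
        | exact h1.symm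
        | exact h2.symm
        | exact h3.symm
  exact hK4 ⟨hiso.symm⟩




lemma tri_struct {T : Set V} (hT : IsTriangle G T) {v : V} (hv : v ∈ T) :
    ∃ x y, x ≠ y ∧ G.Adj v x ∧ G.Adj v y ∧ G.Adj x y ∧ T = {v,x,y} := by
  obtain ⟨a,b,c,hab,hac,hbc,h1,h2,h3,rfl⟩ := hT
  simp only [Set.mem_insert_iff, Set.mem_singleton_iff] at hv
  rcases hv with rfl | rfl | rfl
  · exact ⟨b,c,hbc,h1,h2,h3,rfl⟩
  · exact ⟨a,c,hac,h1.symm,h3,h2, by ext x; simp; tauto⟩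
  · exact ⟨a,b,hab,h2.symm,h3.symm,h1, by ext x; simp; tauto⟩

lemma tri_ncard {T : Set V} (hT : IsTriangle G T) : T.ncard = 3 := by
  obtain ⟨a,b,c,hab,hac,hbc,_,_,_,rfl⟩ := hT
  exact Set.ncard_eq_three.mpr ⟨a,b,c,hab,hac,hbc,rfl⟩

lemma dia_ncard {D : Set V} (hD : IsDiamond G D) : D.ncard = 4 := by
  obtain ⟨a,b,c,d,hab,hac,had,hbc,hbd,hcd,_,_,_,_,_,_,rfl⟩ := hD
  rw [Set.ncard_insert_of_notMem (by simp [hab, hac, had]),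
      Set.ncard_insert_of_notMem (by simp [hbc, hbd]),
      Set.ncard_pair hcd]

lemma tri_pairwise {T : Set V} (hT : IsTriangle G T) {x y : V}
    (hx : x ∈ T) (hy : y ∈ T) (hxy : x ≠ y) : G.Adj x y := by
  obtain ⟨a,b,c,hab,hac,hbc,h1,h2,h3,rfl⟩ := hT
  simp only [Set.mem_insert_iff, Set.mem_singleton_iff] at hx hy
  rcases hx with rfl|rfl|rfl <;> rcases hy with rfl|rfl|rfl <;>
    first | exact absurd rfl hxy | assumption | exact G.symm.symm _ _ ‹_›

lemma exists_tri (hcub : ∀ v : V, (G.neighborSet v).ncard = 3)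
    (hcf : ClawFree G) (v : V) : ∃ T, IsTriangle G T ∧ v ∈ T := by
  obtain ⟨a,b,c,hab,hac,hbc,hN⟩ := Set.ncard_eq_three.mp (hcub v)
  have ha : G.Adj v a := by rw [← G.mem_neighborSet, hN]; simp
  have hb : G.Adj v b := by rw [← G.mem_neighborSet, hN]; simp
  have hc : G.Adj v c := by rw [← G.mem_neighborSet, hN]; simp
  have hedge : G.Adj a b ∨ G.Adj a c ∨ G.Adj b c := by
    by_contra h
    push_neg at h
    exact hcf ⟨v,a,b,c,hab,hac,hbc,ha,hb,hc,h.1,h.2.1,h.2.2⟩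
  rcases hedge with h|h|h
  · exact ⟨{v,a,b}, ⟨v,a,b,ha.ne,hb.ne,hab,ha,hb,h,rfl⟩, by simp⟩
  · exact ⟨{v,a,c}, ⟨v,a,c,ha.ne,hc.ne,hac,ha,hc,h,rfl⟩, by simp⟩
  · exact ⟨{v,b,c}, ⟨v,b,c,hb.ne,hc.ne,hbc,hb,hc,h,rfl⟩, by simp⟩

lemma tri_sub_insert (hcub : ∀ v : V, (G.neighborSet v).ncard = 3)
    {T : Set V} (hT : IsTriangle G T) {v : V} (hv : v ∈ T) :
    T ⊆ insert v (G.neighborSet v) := by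
  obtain ⟨x,y,hxy,hvx,hvy,_,rfl⟩ := tri_struct hT hv
  intro z hz
  simp only [Set.mem_insert_iff, Set.mem_singleton_iff] at hz
  rcases hz with rfl|rfl|rfl
  · exact Set.mem_insert _ _
  · exact Set.mem_insert_of_mem _ hvx
  · exact Set.mem_insert_of_mem _ hvy

lemma low_tri (hcub : ∀ v : V, (G.neighborSet v).ncard = 3)
    {a b c d : V} (hab' : a ≠ b) (hcd' : c ≠ d)
    (hnab : ¬ G.Adj a b) (hac : G.Adj a c) (had : G.Adj a d)
    (hbc : G.Adj b c) (hbd : G.Adj b d) (hcd : G.Adj c d)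
    {T : Set V} (hT : IsTriangle G T) (haT : a ∈ T) : T ⊆ ({a,c,d} : Set V) := by
  have hNc : G.neighborSet c = {a,b,d} :=
    nbr_eq hcub hab' had.ne hbd.ne hac.symm hbc.symm hcd
  have hNd : G.neighborSet d = {a,b,c} :=
    nbr_eq hcub hab' hac.ne hbc.ne had.symm hbd.symm hcd.symm
  have claim : ∀ p q : V, G.Adj a p → G.Adj a q → G.Adj p q → p ≠ q →
      p ∈ ({c,d} : Set V) := by
    intro p q hap haq hpq hpqne
    by_contra hp
    simp only [Set.mem_insert_iff, Set.mem_singleton_iff, not_or] at hp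
    have hNa : G.neighborSet a = {c,d,p} :=
      nbr_eq hcub hcd' (Ne.symm hp.1) (Ne.symm hp.2) hac had hap
    have hq := adj_mem_of hNa haq
    rcases hq with rfl|rfl|rfl
    · -- q = c, p adjacent to c
      rcases adj_mem_of hNc hpq.symm with rfl|rfl|rfl
      · exact G.loopless.irrefl _ hap
      · exact hnab hap
      · exact hp.2 rfl
    · rcases adj_mem_of hNd hpq.symm with rfl|rfl|rfl
      · exact G.loopless.irrefl _ hap
      · exact hnab hap
      · exact hp.1 rfl
    · exact hpqne rfl
  obtain ⟨x,y,hxy,hax,hay,hxy2,rfl⟩ := tri_struct hT haT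
  have hx := claim x y hax hay hxy2 hxy
  have hy := claim y x hay hax hxy2.symm hxy.symm
  intro z hz
  simp only [Set.mem_insert_iff, Set.mem_singleton_iff] at hz hx hy ⊢
  rcases hz with rfl|rfl|rfl
  · tauto
  · rcases hx with rfl|rfl <;> tauto
  · rcases hy with rfl|rfl <;> tauto

lemma tri_subset_diamond (hcub : ∀ v : V, (G.neighborSet v).ncard = 3)
    {D T : Set V} {v : V} (hD : IsDiamond G D) (hv : v ∈ D)
    (hT : IsTriangle G T) (hvT : v ∈ T) : T ⊆ D := by
  obtain ⟨a,b,c,d,hab,hac,had,hbc,hbd,hcd,hnab,h1,h2,h3,h4,h5,rfl⟩ := hD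
  simp only [Set.mem_insert_iff, Set.mem_singleton_iff] at hv
  have hsub1 : ({a,c,d} : Set V) ⊆ {a,b,c,d} := by intro z hz; simp at hz ⊢; tauto
  have hsub2 : ({b,c,d} : Set V) ⊆ {a,b,c,d} := by intro z hz; simp at hz ⊢; tauto
  rcases hv with rfl|rfl|rfl|rfl
  · exact (low_tri hcub hab hcd hnab h1 h2 h3 h4 h5 hT hvT).trans hsub1
  · exact (low_tri hcub (Ne.symm hab) hcd (fun h => hnab h.symm) h3 h4 h1 h2 h5 hT hvT).trans hsub2
  · -- v = c
    have hNc : G.neighborSet v = {a,b,d} :=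
      nbr_eq hcub hab had hbd h1.symm h3.symm h5
    refine (tri_sub_insert hcub hT hvT).trans ?_
    rw [hNc]; intro z hz; simp at hz ⊢; tauto
  · have hNd : G.neighborSet v = {a,b,c} :=
      nbr_eq hcub hab hac hbc h2.symm h4.symm h5.symm
    refine (tri_sub_insert hcub hT hvT).trans ?_
    rw [hNd]; intro z hz; simp at hz ⊢; tauto

lemma mem_diamond_tri {D : Set V} (hD : IsDiamond G D) {v : V} (hv : v ∈ D) :
    ∃ T, IsTriangle G T ∧ v ∈ T ∧ T ⊆ D := by
  obtain ⟨a,b,c,d,hab,hac,had,hbc,hbd,hcd,hnab,h1,h2,h3,h4,h5,rfl⟩ := hD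
  simp only [Set.mem_insert_iff, Set.mem_singleton_iff] at hv
  have t1 : IsTriangle G {a,c,d} := ⟨a,c,d,hac,had,hcd,h1,h2,h5,rfl⟩
  have t2 : IsTriangle G {b,c,d} := ⟨b,c,d,hbc,hbd,hcd,h3,h4,h5,rfl⟩
  have hsub1 : ({a,c,d} : Set V) ⊆ {a,b,c,d} := by intro z hz; simp at hz ⊢; tauto
  have hsub2 : ({b,c,d} : Set V) ⊆ {a,b,c,d} := by intro z hz; simp at hz ⊢; tauto
  rcases hv with rfl|rfl|rfl|rfl
  · exact ⟨_, t1, by simp, hsub1⟩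
  · exact ⟨_, t2, by simp, hsub2⟩
  · exact ⟨_, t1, by simp, hsub1⟩
  · exact ⟨_, t1, by simp, hsub1⟩

lemma tris_intersect {D T1 T2 : Set V} (hD : IsDiamond G D)
    (hT1 : IsTriangle G T1) (hT2 : IsTriangle G T2)
    (h1 : T1 ⊆ D) (h2 : T2 ⊆ D) : (T1 ∩ T2).Nonempty := by
  by_contra h
  rw [Set.not_nonempty_iff_eq_empty] at h
  have hu : (T1 ∪ T2).ncard = 6 := by
    rw [Set.ncard_union_eq (Set.disjoint_iff_inter_eq_empty.mpr h)
      (Set.toFinite _) (Set.toFinite _), tri_ncard hT1, tri_ncard hT2]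
  have hle : (T1 ∪ T2).ncard ≤ D.ncard :=
    Set.ncard_le_ncard (Set.union_subset h1 h2) (Set.toFinite _)
  rw [hu, dia_ncard hD] at hle
  omega

lemma diamonds_eq (hcub : ∀ v : V, (G.neighborSet v).ncard = 3)
    {D1 D2 : Set V} (hD1 : IsDiamond G D1) (hD2 : IsDiamond G D2)
    {v : V} (hv1 : v ∈ D1) (hv2 : v ∈ D2) : D1 = D2 := by
  obtain ⟨T, hT, hvT, hTD1⟩ := mem_diamond_tri hD1 hv1
  have hTD2 : T ⊆ D2 := tri_subset_diamond hcub hD2 hv2 hT hvT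
  have key : ∀ E1 E2 : Set V, IsDiamond G E1 → IsDiamond G E2 →
      T ⊆ E1 → T ⊆ E2 → E1 ⊆ E2 := by
    intro E1 E2 hE1 hE2 hTE1 hTE2 u hu
    obtain ⟨Tu, hTu, huTu, hTuE1⟩ := mem_diamond_tri hE1 hu
    obtain ⟨z, hz1, hz2⟩ := tris_intersect hE1 hTu hT hTuE1 hTE1
    exact tri_subset_diamond hcub hE2 (hTE2 hz2) hTu hz1 huTu
  exact Set.Subset.antisymm (key D1 D2 hD1 hD2 hTD1 hTD2) (key D2 D1 hD2 hD1 hTD2 hTD1)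

lemma two_tri (hconn : G.Connected)
    (hK4 : ¬ Nonempty (G ≃g (⊤ : SimpleGraph (Fin 4))))
    (hcub : ∀ v : V, (G.neighborSet v).ncard = 3)
    {v : V} {T1 T2 : Set V} (hT1 : IsTriangle G T1) (hT2 : IsTriangle G T2)
    (hv1 : v ∈ T1) (hv2 : v ∈ T2) (hne : T1 ≠ T2) :
    ∃ D, IsDiamond G D ∧ T1 ⊆ D ∧ T2 ⊆ D := by
  obtain ⟨x,y,hxy,hvx,hvy,hxy2,hT1e⟩ := tri_struct hT1 hv1
  -- find u ∈ T2 \ T1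
  have hex : ∃ u ∈ T2, u ∉ T1 := by
    by_contra h
    push_neg at h
    exact hne (Set.eq_of_subset_of_ncard_le h
      (by rw [tri_ncard hT1, tri_ncard hT2]) (Set.toFinite _)).symm
  obtain ⟨u, huT2, huT1⟩ := hex
  have huv : u ≠ v := fun h => huT1 (h ▸ hv1)
  have hvu : G.Adj v u := tri_pairwise hT2 hv2 huT2 huv.symm
  -- partner of u in T2
  obtain ⟨p,q,hpq,hvp,hvq,hpq2,hT2e⟩ := tri_struct hT2 hv2
  have hu_mem : u = p ∨ u = q := by
    have := hT2e ▸ huT2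
    simp only [Set.mem_insert_iff, Set.mem_singleton_iff] at this
    rcases this with rfl|h|h
    · exact absurd rfl huv
    · exact Or.inl h
    · exact Or.inr h
  have hxu : x ≠ u := fun h => huT1 (hT1e ▸ (by simp [h]))
  have hyu : y ≠ u := fun h => huT1 (hT1e ▸ (by simp [h]))
  have hNv : G.neighborSet v = {x, y, u} :=
    nbr_eq hcub hxy (Ne.symm hxu).symm (Ne.symm hyu).symm hvx hvy hvu
  obtain ⟨w, hwu, hw_adj, hvw, hT2sub⟩ :
      ∃ w, w ≠ u ∧ G.Adj u w ∧ G.Adj v w ∧ T2 ⊆ ({v, u, w} : Set V) := by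
    rcases hu_mem with rfl|rfl
    · exact ⟨q, hpq.symm, hpq2, hvq, by rw [hT2e]⟩
    · refine ⟨p, hpq, hpq2.symm, hvp, ?_⟩
      rw [hT2e]; intro z hz; simp at hz ⊢; tauto
  have hw_cases : w = x ∨ w = y := by
    rcases adj_mem_of hNv hvw with rfl|rfl|rfl
    · exact Or.inl rfl
    · exact Or.inr rfl
    · exact absurd rfl hwu
  have hnoK4 : ¬ (G.Adj x y ∧ G.Adj x u ∧ G.Adj y u) := by
    intro ⟨e1, e2, e3⟩
    exact noK4 hconn hK4 hcub hxy hxu hyu hvx hvy hvu e1 e2 e3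
  rcases hw_cases with rfl|rfl
  · -- w = x : edges xy, ux present; uy absent
    have hnuy : ¬ G.Adj y u := fun h => hnoK4 ⟨hxy2, hw_adj.symm, h⟩
    refine ⟨{u,y,w,v}, ⟨u, y, w, v, Ne.symm hyu, hwu.symm, hvu.ne', Ne.symm hxy,
      hvy.ne', hvx.ne', fun h => hnuy h.symm, hw_adj, hvu.symm, hxy2.symm, hvy.symm,
      hvx.symm, rfl⟩, ?_, ?_⟩
    · rw [hT1e]; intro z hz; simp at hz ⊢; tauto
    · refine hT2sub.trans ?_; intro z hz; simp at hz ⊢; tauto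
  · -- w = y : edges xy, uy present; ux absent
    have hnux : ¬ G.Adj x u := fun h => hnoK4 ⟨hxy2, h, hw_adj.symm⟩
    refine ⟨{u,x,w,v}, ⟨u, x, w, v, Ne.symm hxu, hwu.symm, hvu.ne', hxy,
      hvx.ne', hvy.ne', fun h => hnux h.symm, hw_adj, hvu.symm, hxy2, hvx.symm,
      hvy.symm, rfl⟩, ?_, ?_⟩
    · rw [hT1e]; intro z hz; simp at hz ⊢; tauto
    · refine hT2sub.trans ?_; intro z hz; simp at hz ⊢; tauto


lemma core_contra (hcub : ∀ v : V, (G.neighborSet v).ncard = 3)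
    {Q : Set (Set V)} (hQ : IsTDPartition G Q)
    {T : Set V} {a b c d : V} (hTQ : T ∈ Q) (hT : IsTriangle G T)
    (hab : a ≠ b) (hac : a ≠ c) (had : a ≠ d) (hbc : b ≠ c) (hbd : b ≠ d) (hcd : c ≠ d)
    (hnab : ¬ G.Adj a b) (h1 : G.Adj a c) (h2 : G.Adj a d) (h3 : G.Adj b c)
    (h4 : G.Adj b d) (h5 : G.Adj c d)
    (hbT : b ∉ T) (hTsub : T ⊆ ({a,b,c,d} : Set V)) : False := by
  have hD : IsDiamond G ({a,b,c,d} : Set V) :=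
    ⟨a,b,c,d,hab,hac,had,hbc,hbd,hcd,hnab,h1,h2,h3,h4,h5,rfl⟩
  have hTacd : T = ({a,c,d} : Set V) := by
    have hsub : T ⊆ ({a,c,d} : Set V) := by
      intro z hz
      have := hTsub hz
      simp only [Set.mem_insert_iff, Set.mem_singleton_iff] at this ⊢
      rcases this with rfl|rfl|rfl|rfl
      · exact Or.inl rfl
      · exact absurd hz hbT
      · tauto
      · tauto
    exact (Set.eq_of_subset_of_ncard_le hsub
      (by rw [tri_ncard hT, Set.ncard_eq_three.mpr ⟨a,c,d,hac,had,hcd,rfl⟩])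
      (Set.toFinite _))
  have hbD : b ∈ ({a,b,c,d} : Set V) := by simp
  obtain ⟨Sb, ⟨hSbQ, hbSb⟩, _⟩ := hQ.2 b
  have hcSb : c ∈ Sb := by
    rcases hQ.1 Sb hSbQ with htri | hdia
    · have hSbD : Sb ⊆ ({a,b,c,d} : Set V) :=
        tri_subset_diamond hcub hD hbD htri hbSb
      have haSb : a ∉ Sb := fun h =>
        hnab (tri_pairwise htri h hbSb hab)
      have hsub : Sb ⊆ ({b,c,d} : Set V) := by
        intro z hz
        have := hSbD hz
        simp only [Set.mem_insert_iff, Set.mem_singleton_iff] at this ⊢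
        rcases this with rfl|rfl|rfl|rfl
        · exact absurd hz haSb
        · tauto
        · tauto
        · tauto
      have : Sb = ({b,c,d} : Set V) := Set.eq_of_subset_of_ncard_le hsub
        (by rw [tri_ncard htri, Set.ncard_eq_three.mpr ⟨b,c,d,hbc,hbd,hcd,rfl⟩])
        (Set.toFinite _)
      rw [this]; simp
    · have : Sb = ({a,b,c,d} : Set V) := diamonds_eq hcub hdia hD hbSb hbD
      rw [this]; simp
  have hcT : c ∈ T := by rw [hTacd]; simp
  obtain ⟨U, _, hUuniq⟩ := hQ.2 c
  have e1 : T = U := hUuniq T ⟨hTQ, hcT⟩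
  have e2 : Sb = U := hUuniq Sb ⟨hSbQ, hcSb⟩
  have hTSb : T = Sb := e1.trans e2.symm
  rw [hTSb] at hbT
  exact hbT hbSb

lemma not_tri_block_in_diamond (hcub : ∀ v : V, (G.neighborSet v).ncard = 3)
    {Q : Set (Set V)} (hQ : IsTDPartition G Q)
    {T D : Set V} (hTQ : T ∈ Q) (hT : IsTriangle G T)
    (hD : IsDiamond G D) (hsub : T ⊆ D) : False := by
  obtain ⟨a,b,c,d,hab,hac,had,hbc,hbd,hcd,hnab,h1,h2,h3,h4,h5,rfl⟩ := hD
  have hnot : ¬ (a ∈ T ∧ b ∈ T) := fun ⟨ha, hb⟩ =>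
    hnab (tri_pairwise hT ha hb hab)
  by_cases hbT : b ∈ T
  · have haT : a ∉ T := fun h => hnot ⟨h, hbT⟩
    refine core_contra hcub hQ hTQ hT (Ne.symm hab) hbc hbd hac had hcd
      (fun h => hnab h.symm) h3 h4 h1 h2 h5 haT ?_
    intro z hz; have := hsub hz; simp at this ⊢; tauto
  · exact core_contra hcub hQ hTQ hT hab hac had hbc hbd hcd
      hnab h1 h2 h3 h4 h5 hbT hsub

theorem main_thm (hconn : G.Connected) (hcf : ClawFree G)
    (hcub : ∀ v : V, (G.neighborSet v).ncard = 3)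
    (hK4 : ¬ Nonempty (G ≃g (⊤ : SimpleGraph (Fin 4)))) :
    ∃! P : Set (Set V), IsTDPartition G P := by
  set P : Set (Set V) :=
    {S | IsDiamond G S ∨ (IsTriangle G S ∧ ∀ D, IsDiamond G D → ¬ S ⊆ D)} with hP
  have block_unique : ∀ (v : V) (S1 S2 : Set V), S1 ∈ P → S2 ∈ P →
      v ∈ S1 → v ∈ S2 → S1 = S2 := by
    intro v S1 S2 h1 h2 hv1 hv2
    rcases h1 with hd1 | ⟨ht1, hnd1⟩ <;> rcases h2 with hd2 | ⟨ht2, hnd2⟩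
    · exact diamonds_eq hcub hd1 hd2 hv1 hv2
    · exact absurd (tri_subset_diamond hcub hd1 hv1 ht2 hv2) (hnd2 S1 hd1)
    · exact absurd (tri_subset_diamond hcub hd2 hv2 ht1 hv1) (hnd1 S2 hd2)
    · by_contra hne
      obtain ⟨D, hD, hsub1, _⟩ := two_tri hconn hK4 hcub ht1 ht2 hv1 hv2 hne
      exact hnd1 D hD hsub1
  have hPpart : IsTDPartition G P := by
    constructor
    · intro S hS
      rcases hS with hd | ⟨ht, _⟩
      · exact Or.inr hd
      · exact Or.inl ht
    · intro v
      obtain ⟨T, hT, hvT⟩ := exists_tri hcub hcf v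
      by_cases hex : ∃ D, IsDiamond G D ∧ T ⊆ D
      · obtain ⟨D, hD, hsub⟩ := hex
        refine ⟨D, ⟨Or.inl hD, hsub hvT⟩, ?_⟩
        intro S ⟨hSP, hvS⟩
        exact block_unique v S D hSP (Or.inl hD) hvS (hsub hvT)
      · push_neg at hex
        refine ⟨T, ⟨Or.inr ⟨hT, fun D hD => hex D hD⟩, hvT⟩, ?_⟩
        intro S ⟨hSP, hvS⟩
        exact block_unique v S T hSP (Or.inr ⟨hT, fun D hD => hex D hD⟩) hvS hvT
  refine ⟨P, hPpart, ?_⟩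
  intro Q hQ
  have hQP : Q ⊆ P := by
    intro S hSQ
    rcases hQ.1 S hSQ with ht | hd
    · refine Or.inr ⟨ht, fun D hD hsub => ?_⟩
      exact not_tri_block_in_diamond hcub hQ hSQ ht hD hsub
    · exact Or.inl hd
  apply Set.Subset.antisymm hQP
  intro S hSP
  have hSne : S.Nonempty := by
    rcases hSP with hd | ⟨ht, _⟩
    · obtain ⟨a,b,c,d,_,_,_,_,_,_,_,_,_,_,_,_,rfl⟩ := hd
      exact ⟨a, by simp⟩
    · obtain ⟨a,b,c,_,_,_,_,_,_,rfl⟩ := ht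
      exact ⟨a, by simp⟩
  obtain ⟨v, hvS⟩ := hSne
  obtain ⟨U, ⟨hUQ, hvU⟩, _⟩ := hQ.2 v
  have hUP : U ∈ P := hQP hUQ
  have : S = U := block_unique v S U hSP hUP hvS hvU
  rw [this]
  exact hUQ

end AuxTD

theorem stmt6 {V : Type*} [Fintype V] (G : SimpleGraph V)
    (hconn : G.Connected) (hcf : ClawFree G)
    (hcub : ∀ v : V, (G.neighborSet v).ncard = 3)
    (hK4 : ¬ Nonempty (G ≃g (⊤ : SimpleGraph (Fin 4)))) :
    ∃! P : Set (Set V), IsTDPartition G P := by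
  exact main_thm hconn hcf hcub hK4
end

section
/- If G is a connected, claw-free, cubic graph, then σ_{(3,2)}(G) = β(G), i.e., the minimum size of a (3,2)-spreading set equals the vertex cover number of G. -/
open SimpleGraph Set

variable {V : Type*}

lemma spread_iff_cover {V : Type*} [Fintype V] (G : SimpleGraph V)
    (hcf : ClawFree G) (hcub : ∀ v : V, (G.neighborSet v).ncard = 3)
    (S : Set V) : IsSpreadingSet G 3 2 S ↔ _root_.IsVertexCover G S := by
  constructor
  · rintro ⟨n, hn⟩ u v huv
    by_contra h
    push_neg at h
    obtain ⟨hu, hv⟩ := h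
    -- u and v stay white forever
    have key : ∀ m, u ∉ (spreadStep G 3 2)^[m] S ∧ v ∉ (spreadStep G 3 2)^[m] S := by
      intro m
      induction m with
      | zero => exact ⟨hu, hv⟩
      | succ m ih =>
        rw [Function.iterate_succ_apply']
        set B := (spreadStep G 3 2)^[m] S with hB
        have step : ∀ x y : V, G.Adj x y → x ∉ B → y ∉ B → x ∉ spreadStep G 3 2 B := by
          intro x y hxy hx hy hmem
          rcases hmem with hmem | hmem
          · exact hx hmem
          · have hsub : G.neighborSet x ∩ B ⊆ G.neighborSet x \ {y} :=
              fun z hz => ⟨hz.1, fun hzy => hy (hzy ▸ hz.2)⟩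
            have hyx : y ∈ G.neighborSet x := hxy
            have h2 : (G.neighborSet x \ {y}).ncard = 2 := by
              rw [Set.ncard_diff_singleton_of_mem hyx, hcub x]
            have hle : (G.neighborSet x ∩ B).ncard ≤ 2 := by
              rw [← h2]
              exact Set.ncard_le_ncard hsub (Set.toFinite _)
            exact absurd hmem.1 (by omega)
        exact ⟨step u v huv ih.1 ih.2, step v u huv.symm ih.2 ih.1⟩
    exact (key n).1 (hn ▸ Set.mem_univ u)
  · intro hS
    refine ⟨1, ?_⟩
    rw [Function.iterate_one]
    apply Set.eq_univ_of_forall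
    intro w
    by_cases hw : w ∈ S
    · exact Or.inl hw
    · right
      -- all neighbors of w are in S
      have hNS : G.neighborSet w ∩ S = G.neighborSet w := by
        apply Set.inter_eq_left.mpr
        intro x hx
        rcases hS hx with h | h
        · exact absurd h hw
        · exact h
      have hcard : (G.neighborSet w ∩ S).ncard = 3 := by rw [hNS, hcub w]
      refine ⟨le_of_eq hcard.symm, ?_⟩
      obtain ⟨a, b, c, hab, hac, hbc, habc⟩ := Set.ncard_eq_three.mp hcard
      have ha : a ∈ G.neighborSet w ∩ S := habc ▸ by simp
      have hb : b ∈ G.neighborSet w ∩ S := habc ▸ by simp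
      have hc : c ∈ G.neighborSet w ∩ S := habc ▸ by simp
      -- helper: if x has a neighbor y in S, then x has ≤ 2 white neighbors
      have helper : ∀ x y : V, G.Adj x y → y ∈ S →
          ((G.neighborSet x \ S).ncard : ℕ∞) ≤ 2 := by
        intro x y hxy hy
        have hsub : G.neighborSet x \ S ⊆ G.neighborSet x \ {y} :=
          fun z hz => ⟨hz.1, fun hzy => hz.2 (hzy ▸ hy)⟩
        have hyx : y ∈ G.neighborSet x := hxy
        have h2 : (G.neighborSet x \ {y}).ncard = 2 := by
          rw [Set.ncard_diff_singleton_of_mem hyx, hcub x]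
        have hle : (G.neighborSet x \ S).ncard ≤ 2 := by
          rw [← h2]
          exact Set.ncard_le_ncard hsub (Set.toFinite _)
        exact_mod_cast hle
      -- claw-freeness gives an adjacent pair among a, b, c
      have hadj : G.Adj a b ∨ G.Adj a c ∨ G.Adj b c := by
        by_contra h
        push_neg at h
        exact hcf ⟨w, a, b, c, hab, hac, hbc, ha.1, hb.1, hc.1, h.1, h.2.1, h.2.2⟩
      rcases hadj with h | h | h
      · exact ⟨a, ha, helper a b h hb.2⟩
      · exact ⟨a, ha, helper a c h hc.2⟩
      · exact ⟨b, hb, helper b c h hc.2⟩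

theorem stmt10 {V : Type*} [Fintype V] (G : SimpleGraph V)
    (hconn : G.Connected) (hcf : ClawFree G)
    (hcub : ∀ v : V, (G.neighborSet v).ncard = 3) :
    spreadNumber G 3 2 = coverNumber G := by
  unfold spreadNumber coverNumber
  congr 1
  ext k
  simp only [Set.mem_setOf_eq]
  constructor
  · rintro ⟨S, hk, hS⟩
    exact ⟨S, hk, (spread_iff_cover G hcf hcub S).mp hS⟩
  · rintro ⟨S, hk, hS⟩
    exact ⟨S, hk, (spread_iff_cover G hcf hcub S).mpr hS⟩
end

section
/- If G is a connected, claw-free, cubic graph, then σ_{(3,1)}(G) ≤ β(G) + 1. -/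
open SimpleGraph Set

variable {V : Type*}

theorem stmt11 {V : Type*} [Fintype V] (G : SimpleGraph V)
    (hconn : G.Connected) (hcf : ClawFree G)
    (hcub : ∀ v : V, (G.neighborSet v).ncard = 3) :
    spreadNumber G 3 1 ≤ coverNumber G + 1 := by
  classical
  -- obtain a minimum vertex cover
  have hne : {k | ∃ C : Set V, C.ncard = k ∧ _root_.IsVertexCover G C}.Nonempty :=
    ⟨(Set.univ : Set V).ncard, Set.univ, rfl, fun u v _ => Or.inl (Set.mem_univ u)⟩
  obtain ⟨C, hCcard, hCcov⟩ : ∃ C : Set V, C.ncard = coverNumber G ∧ _root_.IsVertexCover G C :=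
    Nat.sInf_mem hne
  rcases Set.eq_empty_or_nonempty (Cᶜ) with hI | ⟨w0, hw0⟩
  · -- C = univ : the whole vertex set is trivially spreading
    have hCuniv : C = Set.univ := Set.compl_empty_iff.mp hI
    have h1 : spreadNumber G 3 1 ≤ C.ncard :=
      Nat.sInf_le ⟨C, rfl, 0, by simp [hCuniv]⟩
    omega
  · set S : Set V := insert w0 C with hS
    set f : Set V → Set V := spreadStep G 3 1 with hf
    have hmono : ∀ B : Set V, B ⊆ f B := fun B => Set.subset_union_left
    have hiter : ∀ n : ℕ, S ⊆ f^[n] S := by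
      intro n
      induction n with
      | zero => simp
      | succ n ih =>
        rw [Function.iterate_succ_apply']
        exact ih.trans (hmono _)
    have hfix : ∃ n : ℕ, f^[n + 1] S = f^[n] S := by
      by_contra h
      push_neg at h
      have hstrict : StrictMono (fun n : ℕ => (f^[n] S).ncard) := by
        apply strictMono_nat_of_lt_succ
        intro n
        apply Set.ncard_lt_ncard _ (Set.toFinite _)
        refine HasSubset.Subset.ssubset_of_ne ?_ ?_
        · rw [Function.iterate_succ_apply']
          exact hmono _
        · exact Ne.symm (h n)
      have h1 : Fintype.card V + 1 ≤ (f^[Fintype.card V + 1] S).ncard := hstrict.le_apply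
      have h2 : (f^[Fintype.card V + 1] S).ncard ≤ Fintype.card V := by
        have := Set.ncard_le_ncard (Set.subset_univ (f^[Fintype.card V + 1] S))
          (Set.toFinite _)
        rwa [Set.ncard_univ, Nat.card_eq_fintype_card] at this
      omega
    -- independence of the complement of the cover
    have hindep : ∀ a b : V, a ∉ C → b ∉ C → ¬ G.Adj a b := by
      intro a b ha hb hab
      rcases hCcov hab with h | h
      · exact ha h
      · exact hb h
    -- the key claim : any fixed point containing S is everything
    have claim : ∀ F : Set V, S ⊆ F → f F = F → F = Set.univ := by
      intro F hSF hFfix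
      by_contra hne'
      have hWne : (Fᶜ).Nonempty := by
        rwa [Set.nonempty_compl]
      have hCF : C ⊆ F := (Set.subset_insert _ _).trans hSF
      have hw0F : w0 ∈ F := hSF (Set.mem_insert _ _)
      have hWI : Fᶜ ⊆ Cᶜ := Set.compl_subset_compl.mpr hCF
      -- all neighbors of a white vertex are in C hence in F
      have hnbrC : ∀ w ∈ Fᶜ, G.neighborSet w ⊆ C := by
        intro w hw u hu
        rcases hCcov hu with h | h
        · exact absurd h (hWI hw)
        · exact h
      have hnbr : ∀ w ∈ Fᶜ, G.neighborSet w ⊆ F := fun w hw => (hnbrC w hw).trans hCF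
      by_cases hA : ∃ w ∈ Fᶜ, ∃ u ∈ G.neighborSet w, (G.neighborSet u \ F).ncard ≤ 1
      · -- some white vertex fires, contradicting the fixed point
        obtain ⟨w, hw, u, hu, hcard⟩ := hA
        have hwF : w ∈ spreadStep G 3 1 F := by
          refine Set.mem_union_right _ ?_
          refine ⟨?_, u, ⟨hu, hnbr w hw hu⟩, ?_⟩
          · have h1 : G.neighborSet w ∩ F = G.neighborSet w :=
              Set.inter_eq_self_of_subset_left (hnbr w hw)
            rw [h1, hcub w]
          · exact_mod_cast hcard
        rw [show spreadStep G 3 1 F = f F from rfl, hFfix] at hwF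
        exact hw hwF
      · push_neg at hA
        -- every neighbor of a white vertex has at least two white neighbors
        set M : Set V := Fᶜ ∪ {u | ∃ w ∈ Fᶜ, G.Adj w u} with hM
        have hclosed : ∀ x ∈ M, ∀ y, G.Adj x y → y ∈ M := by
          intro x hx y hxy
          by_cases hyF : y ∈ F
          · rcases hx with hxW | hxN
            · exact Set.mem_union_right _ ⟨x, hxW, hxy⟩
            · obtain ⟨w, hw, hwx⟩ := hxN
              have h2 : 1 < (G.neighborSet x \ F).ncard := hA w hw x hwx
              obtain ⟨w1, w2, hw1, hw2, hne12⟩ :=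
                (Set.one_lt_ncard_iff (Set.toFinite _)).mp h2
              by_contra hyM
              apply hcf
              refine ⟨x, w1, w2, y, hne12, ?_, ?_, hw1.1, hw2.1, hxy, ?_, ?_, ?_⟩
              · intro h; exact hw1.2 (h ▸ hyF)
              · intro h; exact hw2.2 (h ▸ hyF)
              · exact hindep w1 w2 (hWI hw1.2) (hWI hw2.2)
              · intro h
                exact hyM (Set.mem_union_right _ ⟨w1, hw1.2, h⟩)
              · intro h
                exact hyM (Set.mem_union_right _ ⟨w2, hw2.2, h⟩)
          · exact Set.mem_union_left _ hyF
        have key : ∀ (a b : V), G.Walk a b → a ∈ M → b ∈ M := by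
          intro a b p
          induction p with
          | nil => exact id
          | cons h p ih => intro ha; exact ih (hclosed _ ha _ h)
        obtain ⟨w, hw⟩ := hWne
        obtain ⟨p⟩ := hconn.preconnected w w0
        have hw0M : w0 ∈ M := key w w0 p (Set.mem_union_left _ hw)
        rcases hw0M with h | ⟨w', hw', hadj⟩
        · exact h hw0F
        · exact hindep w' w0 (hWI hw') hw0 hadj
    obtain ⟨n, hn⟩ := hfix
    rw [Function.iterate_succ_apply'] at hn
    have hspread : IsSpreadingSet G 3 1 S := ⟨n, claim _ (hiter n) hn⟩
    have hle : spreadNumber G 3 1 ≤ S.ncard := Nat.sInf_le ⟨S, rfl, hspread⟩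
    have hcnt : S.ncard = C.ncard + 1 := Set.ncard_insert_of_notMem hw0 (Set.toFinite C)
    omega
end

section
/- For every k ≥ 2, the diamond-necklace N_k satisfies m(N_k, 2) = k + 1. -/
open SimpleGraph Set

variable {V : Type*}

section Aux

open Function

variable {W : Type*} [Finite W]

lemma ncard_le_one_of_subset_singleton {s : Set W} {x : W} (h : s ⊆ {x}) : s.ncard ≤ 1 :=
  le_trans (Set.ncard_le_ncard h (Set.finite_singleton x)) (by simp)

lemma subset_percStep (G : SimpleGraph W) (r : ℕ) (B : Set W) : B ⊆ percStep G r B :=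
  Set.subset_union_left

lemma iter_percStep_mono (G : SimpleGraph W) (r : ℕ) (S : Set W) {m n : ℕ} (h : m ≤ n) :
    (percStep G r)^[m] S ⊆ (percStep G r)^[n] S := by
  induction n with
  | zero => simpa [Nat.le_zero.mp h] using subset_rfl
  | succ n ih =>
    rcases Nat.lt_or_ge m (n+1) with h' | h'
    · rw [Function.iterate_succ_apply']
      exact (ih (by omega)).trans (subset_percStep _ _ _)
    · have : m = n + 1 := by omega
      subst this; rfl

lemma pair_blue (G : SimpleGraph W) {B : Set W} {v u w : W}
    (hu : u ∈ G.neighborSet v) (hw : w ∈ G.neighborSet v)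
    (hub : u ∈ B) (hwb : w ∈ B) (huw : u ≠ w) : v ∈ percStep G 2 B := by
  refine Set.mem_union_right _ ?_
  show 2 ≤ _
  have hsub : ({u, w} : Set W) ⊆ G.neighborSet v ∩ B := by
    rintro x (rfl | rfl)
    · exact ⟨hu, hub⟩
    · exact ⟨hw, hwb⟩
  calc 2 = ({u, w} : Set W).ncard := (Set.ncard_pair huw).symm
    _ ≤ _ := Set.ncard_le_ncard hsub (Set.toFinite _)

lemma closed_iter (G : SimpleGraph W) {S U : Set W} (hSU : S ⊆ U)
    (hU : ∀ v ∉ U, ((G.neighborSet v) ∩ U).ncard ≤ 1) (n : ℕ) :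
    (percStep G 2)^[n] S ⊆ U := by
  induction n with
  | zero => exact hSU
  | succ n ih =>
    rw [Function.iterate_succ_apply']
    rintro v (hv | hv)
    · exact ih hv
    · by_contra hvU
      have h2 : 2 ≤ ((G.neighborSet v) ∩ ((percStep G 2)^[n] S)).ncard := hv
      have h3 := Set.ncard_le_ncard (Set.inter_subset_inter_right (G.neighborSet v) ih)
        (Set.toFinite (G.neighborSet v ∩ U))
      have h4 := hU v hvU
      omega

lemma no_perc (G : SimpleGraph W) {S U : Set W} (hSU : S ⊆ U)
    (hU : ∀ v ∉ U, ((G.neighborSet v) ∩ U).ncard ≤ 1) {w : W} (hw : w ∉ U) :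
    ¬ IsPercolating G 2 S := by
  rintro ⟨n, hn⟩
  exact hw (closed_iter G hSU hU n (hn ▸ Set.mem_univ w))

end Aux

section Necklace

variable {k : ℕ} [Fact (1 < k)]

lemma succ_ne (i : ZMod k) : i + 1 ≠ i := by
  simp [add_eq_right, add_eq_left]

lemma pred_ne (i : ZMod k) : i - 1 ≠ i := fun h =>
  succ_ne i (sub_eq_iff_eq_add.mp h).symm

lemma nbr0 (i : ZMod k) : (diamondNecklace k).neighborSet (i,(0:Fin 4)) =
    {(i,2),(i,3),(i+1,1)} := by
  have h1 := succ_ne i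
  ext ⟨j,t⟩
  simp only [diamondNecklace, mem_neighborSet, fromRel_adj, Set.mem_insert_iff,
    Set.mem_singleton_iff, Prod.mk.injEq, Prod.ext_iff, ne_eq]
  fin_cases t <;> simp_all <;> tauto

lemma nbr1 (i : ZMod k) : (diamondNecklace k).neighborSet (i,(1:Fin 4)) =
    {(i,2),(i,3),(i-1,0)} := by
  have h1 := pred_ne i
  ext ⟨j,t⟩
  simp only [diamondNecklace, mem_neighborSet, fromRel_adj, Set.mem_insert_iff,
    Set.mem_singleton_iff, Prod.mk.injEq, Prod.ext_iff, ne_eq]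
  fin_cases t <;> simp_all [sub_eq_iff_eq_add] <;>
    first
      | tauto
      | (constructor
         · rintro (h|h) <;> simp_all
         · rintro (h|h) <;> simp_all)

lemma nbr2 (i : ZMod k) : (diamondNecklace k).neighborSet (i,(2:Fin 4)) =
    {(i,0),(i,1),(i,3)} := by
  ext ⟨j,t⟩
  simp only [diamondNecklace, mem_neighborSet, fromRel_adj, Set.mem_insert_iff,
    Set.mem_singleton_iff, Prod.mk.injEq, Prod.ext_iff, ne_eq]
  fin_cases t <;> simp_all <;> tauto

lemma nbr3 (i : ZMod k) : (diamondNecklace k).neighborSet (i,(3:Fin 4)) =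
    {(i,0),(i,1),(i,2)} := by
  ext ⟨j,t⟩
  simp only [diamondNecklace, mem_neighborSet, fromRel_adj, Set.mem_insert_iff,
    Set.mem_singleton_iff, Prod.mk.injEq, Prod.ext_iff, ne_eq]
  fin_cases t <;> simp_all <;> tauto

lemma snd_ne {i i' : ZMod k} {t t' : Fin 4} (h : t ≠ t') : (i,t) ≠ (i',t') :=
  fun he => h (congrArg Prod.snd he)

lemma fin4_cases : ∀ t : Fin 4, t = 0 ∨ t = 1 ∨ t = 2 ∨ t = 3 := by decide

lemma necklace_lower (S : Set (ZMod k × Fin 4))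
    (hp : IsPercolating (diamondNecklace k) 2 S) : k + 1 ≤ S.ncard := by
  by_contra hcon
  push_neg at hcon
  have hSk : S.ncard ≤ k := by omega
  -- Step A: every diamond meets S
  have hmeet : ∀ i : ZMod k, ∃ t : Fin 4, (i, t) ∈ S := by
    intro i
    by_contra hno
    push_neg at hno
    refine no_perc (diamondNecklace k) (U := {v : ZMod k × Fin 4 | v.1 ≠ i}) ?_ ?_
      (w := (i, 0)) (by simp) hp
    · rintro ⟨a, b⟩ hv hvi
      simp only at hvi
      subst hvi
      exact hno b hv
    · rintro ⟨j, t⟩ hv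
      simp only [Set.mem_setOf_eq, not_not] at hv
      subst hv
      rcases fin4_cases t with rfl | rfl | rfl | rfl
      · rw [nbr0]
        refine ncard_le_one_of_subset_singleton (x := (j+1,1)) ?_
        rintro x ⟨hx, hxU⟩
        simp only [Set.mem_insert_iff, Set.mem_singleton_iff] at hx ⊢
        rcases hx with rfl | rfl | rfl <;> simp_all
      · rw [nbr1]
        refine ncard_le_one_of_subset_singleton (x := (j-1,0)) ?_
        rintro x ⟨hx, hxU⟩
        simp only [Set.mem_insert_iff, Set.mem_singleton_iff] at hx ⊢
        rcases hx with rfl | rfl | rfl <;> simp_all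
      · rw [nbr2]
        refine ncard_le_one_of_subset_singleton (x := (j,0)) ?_
        rintro x ⟨hx, hxU⟩
        simp only [Set.mem_insert_iff, Set.mem_singleton_iff] at hx ⊢
        rcases hx with rfl | rfl | rfl <;> simp_all
      · rw [nbr3]
        refine ncard_le_one_of_subset_singleton (x := (j,0)) ?_
        rintro x ⟨hx, hxU⟩
        simp only [Set.mem_insert_iff, Set.mem_singleton_iff] at hx ⊢
        rcases hx with rfl | rfl | rfl <;> simp_all
  -- Step B: exactly one vertex of S per diamond
  choose f hf using hmeet
  have hinj : Function.Injective (fun i : ZMod k => ((i, f i) : ZMod k × Fin 4)) :=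
    fun a b hab => congrArg Prod.fst hab
  have hrange : Set.range (fun i : ZMod k => ((i, f i) : ZMod k × Fin 4)) ⊆ S := by
    rintro _ ⟨i, rfl⟩; exact hf i
  have hrcard : (Set.range (fun i : ZMod k => ((i, f i) : ZMod k × Fin 4))).ncard = k := by
    rw [← Set.image_univ, Set.ncard_image_of_injective _ hinj, Set.ncard_univ, Nat.card_zmod]
  have heq : Set.range (fun i : ZMod k => ((i, f i) : ZMod k × Fin 4)) = S :=
    Set.eq_of_subset_of_ncard_le hrange (by omega) (Set.toFinite _)
  have hform : ∀ v ∈ S, v = (v.1, f v.1) := by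
    intro v hv
    rw [← heq] at hv
    obtain ⟨i, rfl⟩ := hv
    rfl
  -- Step C: case analysis
  by_cases h0 : ∃ i : ZMod k, f i = 0
  · obtain ⟨i, hi⟩ := h0
    refine no_perc (diamondNecklace k)
      (U := {v : ZMod k × Fin 4 | v ≠ (i,1) ∧ v ≠ (i,2) ∧ v ≠ (i,3)}) ?_ ?_
      (w := (i,1)) (by simp) hp
    · intro v hv
      have hv' := hform v hv
      refine ⟨?_, ?_, ?_⟩ <;> rintro rfl
      · have h2 : (1:Fin 4) = f i := congrArg Prod.snd hv'
        rw [hi] at h2; exact absurd h2 (by decide)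
      · have h2 : (2:Fin 4) = f i := congrArg Prod.snd hv'
        rw [hi] at h2; exact absurd h2 (by decide)
      · have h2 : (3:Fin 4) = f i := congrArg Prod.snd hv'
        rw [hi] at h2; exact absurd h2 (by decide)
    · intro v hv
      simp only [Set.mem_setOf_eq, not_and_or, not_not] at hv
      rcases hv with rfl | rfl | rfl
      · rw [nbr1]
        refine ncard_le_one_of_subset_singleton (x := (i-1,0)) ?_
        rintro x ⟨hx, hxU⟩
        simp only [Set.mem_insert_iff, Set.mem_singleton_iff, Set.mem_setOf_eq] at hx hxU ⊢
        rcases hx with rfl | rfl | rfl <;> simp_all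
      · rw [nbr2]
        refine ncard_le_one_of_subset_singleton (x := (i,0)) ?_
        rintro x ⟨hx, hxU⟩
        simp only [Set.mem_insert_iff, Set.mem_singleton_iff, Set.mem_setOf_eq] at hx hxU ⊢
        rcases hx with rfl | rfl | rfl <;> simp_all
      · rw [nbr3]
        refine ncard_le_one_of_subset_singleton (x := (i,0)) ?_
        rintro x ⟨hx, hxU⟩
        simp only [Set.mem_insert_iff, Set.mem_singleton_iff, Set.mem_setOf_eq] at hx hxU ⊢
        rcases hx with rfl | rfl | rfl <;> simp_all
  by_cases h1 : ∃ i : ZMod k, f i = 1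
  · obtain ⟨i, hi⟩ := h1
    refine no_perc (diamondNecklace k)
      (U := {v : ZMod k × Fin 4 | v ≠ (i,0) ∧ v ≠ (i,2) ∧ v ≠ (i,3)}) ?_ ?_
      (w := (i,0)) (by simp) hp
    · intro v hv
      have hv' := hform v hv
      refine ⟨?_, ?_, ?_⟩ <;> rintro rfl
      · have h2 : (0:Fin 4) = f i := congrArg Prod.snd hv'
        rw [hi] at h2; exact absurd h2 (by decide)
      · have h2 : (2:Fin 4) = f i := congrArg Prod.snd hv'
        rw [hi] at h2; exact absurd h2 (by decide)
      · have h2 : (3:Fin 4) = f i := congrArg Prod.snd hv'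
        rw [hi] at h2; exact absurd h2 (by decide)
    · intro v hv
      simp only [Set.mem_setOf_eq, not_and_or, not_not] at hv
      rcases hv with rfl | rfl | rfl
      · rw [nbr0]
        refine ncard_le_one_of_subset_singleton (x := (i+1,1)) ?_
        rintro x ⟨hx, hxU⟩
        simp only [Set.mem_insert_iff, Set.mem_singleton_iff, Set.mem_setOf_eq] at hx hxU ⊢
        rcases hx with rfl | rfl | rfl <;> simp_all
      · rw [nbr2]
        refine ncard_le_one_of_subset_singleton (x := (i,1)) ?_
        rintro x ⟨hx, hxU⟩
        simp only [Set.mem_insert_iff, Set.mem_singleton_iff, Set.mem_setOf_eq] at hx hxU ⊢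
        rcases hx with rfl | rfl | rfl <;> simp_all
      · rw [nbr3]
        refine ncard_le_one_of_subset_singleton (x := (i,1)) ?_
        rintro x ⟨hx, hxU⟩
        simp only [Set.mem_insert_iff, Set.mem_singleton_iff, Set.mem_setOf_eq] at hx hxU ⊢
        rcases hx with rfl | rfl | rfl <;> simp_all
  · push_neg at h0 h1
    have haux : ∀ t : Fin 4, t ≠ 0 → t ≠ 1 → t = 2 ∨ t = 3 := by decide
    have h23 : ∀ i : ZMod k, f i = 2 ∨ f i = 3 := fun i => haux (f i) (h0 i) (h1 i)
    have hnotS : ∀ (j : ZMod k) (t : Fin 4), t ≠ 2 → t ≠ 3 → (j, t) ∉ S := by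
      intro j t ht2 ht3 hmem
      have h2 : t = f j := congrArg Prod.snd (hform _ hmem)
      rcases h23 j with h | h <;> rw [h] at h2 <;> simp_all
    refine no_perc (diamondNecklace k) (U := S) subset_rfl ?_ (w := ((0:ZMod k),(0:Fin 4)))
      (hnotS 0 0 (by decide) (by decide)) hp
    rintro ⟨j, t⟩ hv
    rcases fin4_cases t with rfl | rfl | rfl | rfl
    · rw [nbr0]
      refine ncard_le_one_of_subset_singleton (x := (j, f j)) ?_
      rintro x ⟨hx, hxS⟩
      have hxf := hform x hxS
      simp only [Set.mem_insert_iff, Set.mem_singleton_iff] at hx ⊢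
      rcases hx with rfl | rfl | rfl
      · exact hxf
      · exact hxf
      · exact absurd hxS (hnotS _ _ (by decide) (by decide))
    · rw [nbr1]
      refine ncard_le_one_of_subset_singleton (x := (j, f j)) ?_
      rintro x ⟨hx, hxS⟩
      have hxf := hform x hxS
      simp only [Set.mem_insert_iff, Set.mem_singleton_iff] at hx ⊢
      rcases hx with rfl | rfl | rfl
      · exact hxf
      · exact hxf
      · exact absurd hxS (hnotS _ _ (by decide) (by decide))
    · rw [nbr2]
      refine ncard_le_one_of_subset_singleton (x := (j, 3)) ?_
      rintro x ⟨hx, hxS⟩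
      simp only [Set.mem_insert_iff, Set.mem_singleton_iff] at hx ⊢
      rcases hx with rfl | rfl | rfl
      · exact absurd hxS (hnotS _ _ (by decide) (by decide))
      · exact absurd hxS (hnotS _ _ (by decide) (by decide))
      · rfl
    · rw [nbr3]
      refine ncard_le_one_of_subset_singleton (x := (j, 2)) ?_
      rintro x ⟨hx, hxS⟩
      simp only [Set.mem_insert_iff, Set.mem_singleton_iff] at hx ⊢
      rcases hx with rfl | rfl | rfl
      · exact absurd hxS (hnotS _ _ (by decide) (by decide))
      · exact absurd hxS (hnotS _ _ (by decide) (by decide))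
      · rfl

lemma necklace_upper :
    ∃ S : Set (ZMod k × Fin 4), S.ncard = k + 1 ∧ IsPercolating (diamondNecklace k) 2 S := by
  classical
  set S₀ : Set (ZMod k × Fin 4) :=
    insert ((0:ZMod k),(3:Fin 4)) (Set.range fun i : ZMod k => (i,(2:Fin 4))) with hS₀
  have hinj : Function.Injective (fun i : ZMod k => ((i,(2:Fin 4)) : ZMod k × Fin 4)) :=
    fun a b hab => congrArg Prod.fst hab
  have hmem2 : ∀ i : ZMod k, (i,(2:Fin 4)) ∈ S₀ := fun i => Set.mem_insert_iff.mpr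
    (Or.inr ⟨i, rfl⟩)
  have hmem3 : ((0:ZMod k),(3:Fin 4)) ∈ S₀ := Set.mem_insert _ _
  have hnotmem : ((0:ZMod k),(3:Fin 4)) ∉
      Set.range (fun i : ZMod k => ((i,(2:Fin 4)) : ZMod k × Fin 4)) := by
    rintro ⟨i, hi⟩
    have h2 : (2:Fin 4) = 3 := congrArg Prod.snd hi
    exact absurd h2 (by decide)
  refine ⟨S₀, ?_, ?_⟩
  · rw [hS₀, Set.ncard_insert_of_notMem hnotmem (Set.toFinite _),
      ← Set.image_univ, Set.ncard_image_of_injective _ hinj, Set.ncard_univ, Nat.card_zmod]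
  · set P : ℕ → Set (ZMod k × Fin 4) := fun n => (percStep (diamondNecklace k) 2)^[n] S₀
      with hP
    have hPsucc : ∀ n, P (n+1) = percStep (diamondNecklace k) 2 (P n) := fun n =>
      Function.iterate_succ_apply' _ _ _
    have hmono : ∀ {m n : ℕ}, m ≤ n → P m ⊆ P n := fun h =>
      iter_percStep_mono (diamondNecklace k) 2 S₀ h
    have hP2 : ∀ (n : ℕ) (j : ZMod k), (j,(2:Fin 4)) ∈ P n :=
      fun n j => hmono (Nat.zero_le n) (hmem2 j)
    have hstep : ∀ (i : ZMod k) (n : ℕ), (i,(1:Fin 4)) ∈ P n →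
        (i,(3:Fin 4)) ∈ P (n+1) ∧ (i,(0:Fin 4)) ∈ P (n+2) ∧ (i+1,(1:Fin 4)) ∈ P (n+3) := by
      intro i n hb
      have h3 : (i,(3:Fin 4)) ∈ P (n+1) := by
        rw [hPsucc]
        exact pair_blue _ (u := (i,1)) (w := (i,2))
          (by rw [nbr3]; simp) (by rw [nbr3]; simp) hb (hP2 n i) (snd_ne (by decide))
      have h0 : (i,(0:Fin 4)) ∈ P (n+2) := by
        rw [hPsucc]
        exact pair_blue _ (u := (i,2)) (w := (i,3))
          (by rw [nbr0]; simp) (by rw [nbr0]; simp) (hP2 (n+1) i) h3 (snd_ne (by decide))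
      refine ⟨h3, h0, ?_⟩
      rw [hPsucc]
      refine pair_blue _ (u := (i+1,2)) (w := (i,0))
        (by rw [nbr1]; simp) (by rw [nbr1]; simp [sub_eq_iff_eq_add]) (hP2 (n+2) (i+1))
        (hmono (by omega) h0) (snd_ne (by decide))
    have hb0 : ((0:ZMod k),(1:Fin 4)) ∈ P 1 := by
      rw [hPsucc]
      exact pair_blue _ (u := ((0:ZMod k),2)) (w := ((0:ZMod k),3))
        (by rw [nbr1]; simp) (by rw [nbr1]; simp) (hmem2 0) hmem3 (snd_ne (by decide))
    have hchain : ∀ m : ℕ, (((m:ZMod k)),(1:Fin 4)) ∈ P (3*m+1) := by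
      intro m
      induction m with
      | zero => simpa using hb0
      | succ m ih =>
        have h := (hstep _ _ ih).2.2
        have harith : 3*m+1+3 = 3*(m+1)+1 := by ring
        rw [harith] at h
        simpa [Nat.cast_add, Nat.cast_one] using h
    refine ⟨3*k+3, ?_⟩
    apply Set.eq_univ_of_forall
    rintro ⟨j, t⟩
    haveI : NeZero k := ⟨by have := Fact.out (p := 1 < k); omega⟩
    have hjval : ((j.val : ℕ) : ZMod k) = j := ZMod.natCast_rightInverse j
    have hj1 : (j,(1:Fin 4)) ∈ P (3*k+1) := by
      have h := hchain j.val
      rw [hjval] at h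
      exact hmono (by have := j.val_lt; omega) h
    obtain ⟨h3, h0, -⟩ := hstep j _ hj1
    show (j, t) ∈ P (3*k+3)
    rcases fin4_cases t with rfl | rfl | rfl | rfl
    · exact h0
    · exact hmono (by omega) hj1
    · exact hP2 _ j
    · exact hmono (by omega) h3

end Necklace

theorem stmt12 (k : ℕ) (hk : 2 ≤ k) :
    percNumber (diamondNecklace k) 2 = k + 1 := by
  haveI : Fact (1 < k) := ⟨by omega⟩
  obtain ⟨S₀, hcard, hperc⟩ := necklace_upper (k := k)
  refine le_antisymm (Nat.sInf_le ⟨S₀, hcard, hperc⟩)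
    (le_csInf ⟨k+1, S₀, hcard, hperc⟩ ?_)
  rintro m ⟨S, rfl, hp⟩
  exact necklace_lower S hp
end
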